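/- arXiv:math/0010079 — 5 statements merged into one kernel-verified Lean document; each statement's English description precedes it below -/
import Mathlib

section
/- There is a canonical AH-isomorphism ℍ ⊗_ℍ U ≅ U for every AH-module U, where ℍ is regarded as the AH-module (ℍ, 𝕀). -/
open Module

local notation "ℍ" => Quaternion ℝ

noncomputable section

/-- The imaginary quaternions, as a real subspace of `ℍ`. -/
def ImH : Submodule ℝ ℍ where
  carrier := {x | x.re = 0}
  add_mem' := by
    intro a b ha hb
    simp only [Set.mem_setOf_eq] at *
    simp [ha, hb]
  zero_mem' := by simp [Quaternion.re_zero]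
  smul_mem' := by
    intro c x hx
    simp only [Set.mem_setOf_eq] at *
    simp [hx]

variable {U : Type*} [AddCommGroup U] [Module ℝ U] [Module ℍ U]
variable {V : Type*} [AddCommGroup V] [Module ℝ V] [Module ℍ V]
variable {W : Type*} [AddCommGroup W] [Module ℝ W] [Module ℍ W]
variable {X : Type*} [AddCommGroup X] [Module ℝ X] [Module ℍ X]

/-- `U^†`: the real subspace of those real-linear maps `U → ℍ` that are `ℍ`-linear
and map the distinguished subspace `U'` into the imaginary quaternions. -/
def AHDual (U' : Submodule ℝ U) : Submodule ℝ (U →ₗ[ℝ] ℍ) where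
  carrier := {α | (∀ (c : ℍ) (u : U), α (c • u) = c * α u) ∧ ∀ u ∈ U', (α u).re = 0}
  zero_mem' := ⟨fun c u => by simp, fun u hu => by simp [Quaternion.re_zero]⟩
  add_mem' := by
    rintro a b ⟨ha1, ha2⟩ ⟨hb1, hb2⟩
    exact ⟨fun c u => by simp [ha1 c u, hb1 c u, mul_add],
           fun u hu => by simp [ha2 u hu, hb2 u hu]⟩
  smul_mem' := by
    rintro r α ⟨h1, h2⟩
    refine ⟨fun c u => ?_, fun u hu => ?_⟩
    · simp [h1 c u, mul_smul_comm]
    · simp [h2 u hu]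

/-- The AH-module condition: `U^†` separates points of `U`. -/
def IsAH (U' : Submodule ℝ U) : Prop :=
  ∀ u : U, (∀ α : U →ₗ[ℝ] ℍ, α ∈ AHDual U' → α u = 0) → u = 0

/-- The map `ι_U : U → ((U^†) →ₗ ℍ)`, `ι_U(u)(α) = α(u)`. -/
def iotaAH (U' : Submodule ℝ U) : U →ₗ[ℝ] (↥(AHDual U') →ₗ[ℝ] ℍ) where
  toFun u :=
    { toFun := fun α => (α : U →ₗ[ℝ] ℍ) u
      map_add' := fun a b => rfl
      map_smul' := fun r a => rfl }
  map_add' := fun u v => LinearMap.ext fun α => by simp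
  map_smul' := fun r u => LinearMap.ext fun α => by simp

@[simp] theorem iotaAH_apply (U' : Submodule ℝ U) (u : U) (α : ↥(AHDual U')) :
    iotaAH U' u α = (α : U →ₗ[ℝ] ℍ) u := rfl

/-- The quaternionic tensor product `U ⊗_ℍ V`, realised as the subspace of real-bilinear
maps `U^† × V^† → ℍ` all of whose slices lie in `ι_U(U)` resp. `ι_V(V)`. -/
def QTP (U' : Submodule ℝ U) (V' : Submodule ℝ V) :
    Submodule ℝ (↥(AHDual U') →ₗ[ℝ] ↥(AHDual V') →ₗ[ℝ] ℍ) where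
  carrier := {B | (∀ β, ∃ u : U, ∀ α, B α β = iotaAH U' u α) ∧
                  (∀ α, ∃ v : V, ∀ β, B α β = iotaAH V' v β)}
  zero_mem' :=
    ⟨fun β => ⟨0, fun α => by simp⟩, fun α => ⟨0, fun β => by simp⟩⟩
  add_mem' := by
    rintro B C ⟨hB1, hB2⟩ ⟨hC1, hC2⟩
    refine ⟨fun β => ?_, fun α => ?_⟩
    · obtain ⟨u, hu⟩ := hB1 β; obtain ⟨u', hu'⟩ := hC1 β
      exact ⟨u + u', fun α => by simp [hu α, hu' α]⟩
    · obtain ⟨v, hv⟩ := hB2 α; obtain ⟨v', hv'⟩ := hC2 α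
      exact ⟨v + v', fun β => by simp [hv β, hv' β]⟩
  smul_mem' := by
    rintro r B ⟨h1, h2⟩
    refine ⟨fun β => ?_, fun α => ?_⟩
    · obtain ⟨u, hu⟩ := h1 β; exact ⟨r • u, fun α => by simp [hu α]⟩
    · obtain ⟨v, hv⟩ := h2 α; exact ⟨r • v, fun β => by simp [hv β]⟩

/-- The left action of a quaternion `c` on the ambient space of `U ⊗_ℍ V`. -/
def hsmulBil (U' : Submodule ℝ U) (V' : Submodule ℝ V) (c : ℍ) :
    (↥(AHDual U') →ₗ[ℝ] ↥(AHDual V') →ₗ[ℝ] ℍ) →ₗ[ℝ]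
      (↥(AHDual U') →ₗ[ℝ] ↥(AHDual V') →ₗ[ℝ] ℍ) where
  toFun B :=
    { toFun := fun α =>
        { toFun := fun β => c * B α β
          map_add' := fun b b' => by simp [mul_add]
          map_smul' := fun r b => by simp [mul_smul_comm] }
      map_add' := fun a a' => LinearMap.ext fun β => by simp [mul_add]
      map_smul' := fun r a => LinearMap.ext fun β => by simp [mul_smul_comm] }
  map_add' := fun B B' => LinearMap.ext fun α => LinearMap.ext fun β => by simp [mul_add]
  map_smul' := fun r B => LinearMap.ext fun α => LinearMap.ext fun β => by simp [mul_smul_comm]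

@[simp] theorem hsmulBil_apply (U' : Submodule ℝ U) (V' : Submodule ℝ V) (c : ℍ)
    (B : ↥(AHDual U') →ₗ[ℝ] ↥(AHDual V') →ₗ[ℝ] ℍ) (α : ↥(AHDual U')) (β : ↥(AHDual V')) :
    hsmulBil U' V' c B α β = c * B α β := rfl

theorem hsmulBil_mem {U' : Submodule ℝ U} {V' : Submodule ℝ V} (c : ℍ)
    {B : ↥(AHDual U') →ₗ[ℝ] ↥(AHDual V') →ₗ[ℝ] ℍ} (hB : B ∈ QTP U' V') :
    hsmulBil U' V' c B ∈ QTP U' V' := by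
  obtain ⟨h1, h2⟩ := hB
  constructor
  · intro β
    obtain ⟨u, hu⟩ := h1 β
    refine ⟨c • u, fun α => ?_⟩
    have hα : (α : U →ₗ[ℝ] ℍ) (c • u) = c * (α : U →ₗ[ℝ] ℍ) u := α.2.1 c u
    rw [hsmulBil_apply, hu α, iotaAH_apply, iotaAH_apply, hα]
  · intro α
    obtain ⟨v, hv⟩ := h2 α
    refine ⟨c • v, fun β => ?_⟩
    have hβ : (β : V →ₗ[ℝ] ℍ) (c • v) = c * (β : V →ₗ[ℝ] ℍ) v := β.2.1 c v
    rw [hsmulBil_apply, hv β, iotaAH_apply, iotaAH_apply, hβ]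

/-- The primed part of `U ⊗_ℍ V` (the intersection with `𝕀 ⊗ (U^†)^* ⊗ (V^†)^*`). -/
def QTPprimeSet (U' : Submodule ℝ U) (V' : Submodule ℝ V) : Set ↥(QTP U' V') :=
  {x | ∀ (α : ↥(AHDual U')) (β : ↥(AHDual V')),
    (((x : ↥(AHDual U') →ₗ[ℝ] ↥(AHDual V') →ₗ[ℝ] ℍ)) α β).re = 0}

/-- `X_q'`: the real subspace of quaternions anticommuting with `q`. -/
def XqP (q : ℍ) : Submodule ℝ ℍ where
  carrier := {p | p * q = -(q * p)}
  zero_mem' := by simp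
  add_mem' := by
    intro a b ha hb
    simp only [Set.mem_setOf_eq] at *
    rw [add_mul, mul_add, ha, hb, neg_add]
  smul_mem' := by
    intro r p hp
    simp only [Set.mem_setOf_eq] at *
    rw [smul_mul_assoc, hp, mul_smul_comm, smul_neg]

theorem XqP_le_im {q : ℍ} (hq : q.re = 0) (hq0 : q ≠ 0) :
    ∀ p ∈ XqP q, p.re = 0 := by
  intro p hp
  have h : p * q + q * p = 0 := by
    have h' : p * q = -(q * p) := hp
    rw [h', neg_add_cancel]
  have e1 : p.re * q.imI = 0 := by
    have := congrArg QuaternionAlgebra.imI h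
    simp only [Quaternion.imI_add, Quaternion.imI_mul, Quaternion.imI_zero, hq] at this
    linarith
  have e2 : p.re * q.imJ = 0 := by
    have := congrArg QuaternionAlgebra.imJ h
    simp only [Quaternion.imJ_add, Quaternion.imJ_mul, Quaternion.imJ_zero, hq] at this
    linarith
  have e3 : p.re * q.imK = 0 := by
    have := congrArg QuaternionAlgebra.imK h
    simp only [Quaternion.imK_add, Quaternion.imK_mul, Quaternion.imK_zero, hq] at this
    linarith
  by_contra hpre
  apply hq0
  ext
  · exact hq
  · exact (mul_eq_zero.mp e1).resolve_left hpre
  · exact (mul_eq_zero.mp e2).resolve_left hpre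
  · exact (mul_eq_zero.mp e3).resolve_left hpre

open Classical in
/-- The identity map `ℍ → ℍ`, as an element of `(X_q)^†` (junk value if `q` is not
a nonzero imaginary quaternion). -/
def idXqDual (q : ℍ) : ↥(AHDual (XqP q)) :=
  if h : q.re = 0 ∧ q ≠ 0 then
    ⟨(LinearMap.id : ℍ →ₗ[ℝ] ℍ),
      ⟨fun c u => by simp [smul_eq_mul], fun u hu => XqP_le_im h.1 h.2 u hu⟩⟩
  else 0

/-- The image of `id ⊗_ℍ χ_q : U ⊗_ℍ X_q → U` inside `U`. -/
def chiImage (U' : Submodule ℝ U) (q : ℍ) : Set U :=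
  {u | ∃ B ∈ QTP U' (XqP q), ∀ α : ↥(AHDual U'), B α (idXqDual q) = iotaAH U' u α}

/-- A (finite-dimensional) AH-module is semistable if it is generated as an `ℍ`-module by
the images of the maps `id ⊗_ℍ χ_q` over all nonzero imaginary `q`. -/
def Semistable (U' : Submodule ℝ U) : Prop :=
  Submodule.span ℍ (⋃ q ∈ {q : ℍ | q.re = 0 ∧ q ≠ 0}, chiImage U' q) = ⊤

/-- `U ⊗_ℍ X_q` is AH-isomorphic to the direct sum of `n` copies of `X_q`. -/
def AHIsoNXq (U' : Submodule ℝ U) (q : ℍ) (n : ℕ) : Prop :=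
  ∃ e : ↥(QTP U' (XqP q)) ≃ₗ[ℝ] (Fin n → ℍ),
    (∀ (c : ℍ) (x : ↥(QTP U' (XqP q))),
      e ⟨hsmulBil U' (XqP q) c ↑x, hsmulBil_mem c x.2⟩ = c • e x) ∧
    ((fun x => e x) '' QTPprimeSet U' (XqP q) = {f : Fin n → ℍ | ∀ i, f i ∈ XqP q})

/-- A stable AH-module with virtual dimension `r`. -/
def Stable (U' : Submodule ℝ U) (r : ℕ) : Prop :=
  Semistable U' ∧ ∀ q : ℍ, q.re = 0 → q ≠ 0 → AHIsoNXq U' q r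

/-- A stable AH-module (existentially quantified virtual dimension). -/
def IsStable (U' : Submodule ℝ U) : Prop :=
  Semistable U' ∧ ∃ j r : ℕ, finrank ℝ U = 4 * j ∧ finrank ℝ ↥U' = 2 * j + r ∧
    ∀ q : ℍ, q.re = 0 → q ≠ 0 → AHIsoNXq U' q r

/-- The dual `φ^× : V^† → U^†` of an AH-morphism `φ : U → V`. -/
def dualPull (U' : Submodule ℝ U) (V' : Submodule ℝ V) (φ : U →ₗ[ℝ] V)
    (hφH : ∀ (c : ℍ) (u : U), φ (c • u) = c • φ u) (hφ' : ∀ u ∈ U', φ u ∈ V') :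
    ↥(AHDual V') →ₗ[ℝ] ↥(AHDual U') where
  toFun γ := ⟨(γ : V →ₗ[ℝ] ℍ).comp φ,
    ⟨fun c u => by simp [hφH c u, γ.2.1], fun u hu => γ.2.2 _ (hφ' u hu)⟩⟩
  map_add' := fun a b => Subtype.ext (LinearMap.ext fun u => by simp)
  map_smul' := fun r a => Subtype.ext (LinearMap.ext fun u => by simp)


def alphaId : ↥(AHDual (ImH)) :=
  ⟨LinearMap.id, ⟨fun c u => by simp [smul_eq_mul], fun u hu => hu⟩⟩

theorem AHDual_ImH_re (α : ↥(AHDual ImH)) (x : ℍ) :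
    (α : ℍ →ₗ[ℝ] ℍ) x = ((α : ℍ →ₗ[ℝ] ℍ) 1).re • x := by
  obtain ⟨h1, h2⟩ := α.2
  set p := (α : ℍ →ₗ[ℝ] ℍ) 1 with hp
  have hx : ∀ y : ℍ, (α : ℍ →ₗ[ℝ] ℍ) y = y * p := fun y => by
    simpa [smul_eq_mul] using h1 y 1
  have hi : p.imI = 0 := by
    have h := h2 (id ⟨0,1,0,0⟩) rfl
    rw [hx] at h
    simp [Quaternion.re_mul] at h
    dsimp only [id] at h
    linarith [h]
  have hj : p.imJ = 0 := by
    have h := h2 (id ⟨0,0,1,0⟩) rfl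
    rw [hx] at h
    simp [Quaternion.re_mul] at h
    dsimp only [id] at h
    linarith [h]
  have hk : p.imK = 0 := by
    have h := h2 (id ⟨0,0,0,1⟩) rfl
    rw [hx] at h
    simp [Quaternion.re_mul] at h
    dsimp only [id] at h
    linarith [h]
  have hpc : p = ((p.re : ℝ) : ℍ) := by
    ext <;> simp [hi, hj, hk]
  rw [hx, hpc, Quaternion.mul_coe_eq_smul]
  simp


variable {U' : Submodule ℝ U}

set_option linter.unusedSectionVars false

def qi : ℍ := ⟨0,1,0,0⟩
def qj : ℍ := ⟨0,0,1,0⟩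
def qk : ℍ := ⟨0,0,0,1⟩

@[simp] theorem qi_re : qi.re = 0 := rfl
@[simp] theorem qi_imI : qi.imI = 1 := rfl
@[simp] theorem qi_imJ : qi.imJ = 0 := rfl
@[simp] theorem qi_imK : qi.imK = 0 := rfl
@[simp] theorem qj_re : qj.re = 0 := rfl
@[simp] theorem qj_imI : qj.imI = 0 := rfl
@[simp] theorem qj_imJ : qj.imJ = 1 := rfl
@[simp] theorem qj_imK : qj.imK = 0 := rfl
@[simp] theorem qk_re : qk.re = 0 := rfl
@[simp] theorem qk_imI : qk.imI = 0 := rfl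
@[simp] theorem qk_imJ : qk.imJ = 0 := rfl
@[simp] theorem qk_imK : qk.imK = 1 := rfl

theorem coe_real_smul (hAH : IsAH U') (r : ℝ) (x : U) : ((r : ℝ) : ℍ) • x = r • x := by
  rw [← sub_eq_zero]
  apply hAH
  intro α hα
  have h1 := hα.1 ((r : ℝ) : ℍ) x
  rw [map_sub, h1, map_smul, Quaternion.coe_mul_eq_smul, sub_self]

theorem real_smul_hsmul (hAH : IsAH U') (r : ℝ) (q : ℍ) (x : U) :
    (r • q) • x = r • (q • x) := by
  rw [← Quaternion.coe_mul_eq_smul, mul_smul, coe_real_smul hAH]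

theorem hsmul_real_smul (hAH : IsAH U') (c : ℍ) (r : ℝ) (x : U) :
    c • (r • x) = r • (c • x) := by
  rw [← coe_real_smul hAH r x, smul_smul, ← Quaternion.coe_commutes, mul_smul,
    coe_real_smul hAH r (c • x)]

-- multiplication table, acting on x
theorem sII (x : U) : qi • (qi • x) = -x := by
  rw [smul_smul, show qi * qi = -1 by ext <;> simp [Quaternion.re_one, Quaternion.imI_one, Quaternion.imJ_one, Quaternion.imK_one], neg_one_smul]
theorem sJI (x : U) : qj • (qi • x) = -(qk • x) := by
  rw [smul_smul, show qj * qi = -qk by ext <;> simp, neg_smul]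
theorem sKI (x : U) : qk • (qi • x) = qj • x := by
  rw [smul_smul, show qk * qi = qj by ext <;> simp]
theorem sIJ (x : U) : qi • (qj • x) = qk • x := by
  rw [smul_smul, show qi * qj = qk by ext <;> simp]
theorem sJJ (x : U) : qj • (qj • x) = -x := by
  rw [smul_smul, show qj * qj = -1 by ext <;> simp [Quaternion.re_one, Quaternion.imI_one, Quaternion.imJ_one, Quaternion.imK_one], neg_one_smul]
theorem sKJ (x : U) : qk • (qj • x) = -(qi • x) := by
  rw [smul_smul, show qk * qj = -qi by ext <;> simp, neg_smul]
theorem sIK (x : U) : qi • (qk • x) = -(qj • x) := by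
  rw [smul_smul, show qi * qk = -qj by ext <;> simp, neg_smul]
theorem sJK (x : U) : qj • (qk • x) = qi • x := by
  rw [smul_smul, show qj * qk = qi by ext <;> simp]
theorem sKK (x : U) : qk • (qk • x) = -x := by
  rw [smul_smul, show qk * qk = -1 by ext <;> simp [Quaternion.re_one, Quaternion.imI_one, Quaternion.imJ_one, Quaternion.imK_one], neg_one_smul]

/-- The quaternionification of a real functional. -/
def betaOf (hAH : IsAH U') (f : U →ₗ[ℝ] ℝ) : U →ₗ[ℝ] ℍ where
  toFun x := id ⟨f x, -f (qi • x), -f (qj • x), -f (qk • x)⟩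
  map_add' x y := by
    ext <;> simp [smul_add] <;> dsimp only [id] <;> ring
  map_smul' r x := by
    ext <;> simp [hsmul_real_smul hAH _ r x] <;> dsimp only [id] <;> ring

@[simp] theorem betaOf_re (hAH : IsAH U') (f : U →ₗ[ℝ] ℝ) (x : U) :
    (betaOf hAH f x).re = f x := rfl
@[simp] theorem betaOf_imI (hAH : IsAH U') (f : U →ₗ[ℝ] ℝ) (x : U) :
    (betaOf hAH f x).imI = -f (qi • x) := rfl
@[simp] theorem betaOf_imJ (hAH : IsAH U') (f : U →ₗ[ℝ] ℝ) (x : U) :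
    (betaOf hAH f x).imJ = -f (qj • x) := rfl
@[simp] theorem betaOf_imK (hAH : IsAH U') (f : U →ₗ[ℝ] ℝ) (x : U) :
    (betaOf hAH f x).imK = -f (qk • x) := rfl

theorem smul_decomp (hAH : IsAH U') (c : ℍ) (x : U) :
    c • x = c.re • x + c.imI • (qi • x) + c.imJ • (qj • x) + c.imK • (qk • x) := by
  have hc : c = ((c.re : ℝ) : ℍ) + c.imI • qi + c.imJ • qj + c.imK • qk := by
    ext <;> simp
  calc c • x = (((c.re : ℝ) : ℍ) + c.imI • qi + c.imJ • qj + c.imK • qk) • x := by rw [← hc]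
    _ = _ := by
      rw [add_smul, add_smul, add_smul, coe_real_smul hAH, real_smul_hsmul hAH,
        real_smul_hsmul hAH, real_smul_hsmul hAH]

theorem betaOf_hi (hAH : IsAH U') (f : U →ₗ[ℝ] ℝ) (x : U) :
    betaOf hAH f (qi • x) = qi * betaOf hAH f x := by
  ext <;> simp [sII, sJI, sKI]
theorem betaOf_hj (hAH : IsAH U') (f : U →ₗ[ℝ] ℝ) (x : U) :
    betaOf hAH f (qj • x) = qj * betaOf hAH f x := by
  ext <;> simp [sIJ, sJJ, sKJ]
theorem betaOf_hk (hAH : IsAH U') (f : U →ₗ[ℝ] ℝ) (x : U) :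
    betaOf hAH f (qk • x) = qk * betaOf hAH f x := by
  ext <;> simp [sIK, sJK, sKK]

theorem betaOf_hlin (hAH : IsAH U') (f : U →ₗ[ℝ] ℝ) (c : ℍ) (x : U) :
    betaOf hAH f (c • x) = c * betaOf hAH f x := by
  have hc : c = ((c.re : ℝ) : ℍ) + c.imI • qi + c.imJ • qj + c.imK • qk := by
    ext <;> simp
  rw [smul_decomp hAH c x]
  simp only [map_add, map_smul, betaOf_hi, betaOf_hj, betaOf_hk]
  conv_rhs => rw [hc]
  rw [add_mul, add_mul, add_mul, Quaternion.coe_mul_eq_smul, smul_mul_assoc, smul_mul_assoc,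
    smul_mul_assoc]

theorem betaOf_mem (hAH : IsAH U') (f : U →ₗ[ℝ] ℝ) (hf : ∀ u ∈ U', f u = 0) :
    betaOf hAH f ∈ AHDual U' :=
  ⟨fun c u => betaOf_hlin hAH f c u, fun u hu => by rw [betaOf_re, hf u hu]⟩

theorem mem_of_forall_dual_re (hAH : IsAH U') (u : U)
    (h : ∀ β : U →ₗ[ℝ] ℍ, β ∈ AHDual U' → (β u).re = 0) : u ∈ U' := by
  rw [← Subspace.forall_mem_dualAnnihilator_apply_eq_zero_iff U' u]
  intro φ hφ
  rw [Submodule.mem_dualAnnihilator] at hφ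
  have := h (betaOf hAH φ) (betaOf_mem hAH φ hφ)
  rwa [betaOf_re] at this

def Jmap (U' : Submodule ℝ U) : U →ₗ[ℝ] (↥(AHDual (ImH)) →ₗ[ℝ] ↥(AHDual U') →ₗ[ℝ] ℍ) where
  toFun u :=
    { toFun := fun α =>
        { toFun := fun β => (α : ℍ →ₗ[ℝ] ℍ) ((β : U →ₗ[ℝ] ℍ) u)
          map_add' := fun a b => by simp
          map_smul' := fun r a => by simp }
      map_add' := fun a b => LinearMap.ext fun β => by simp
      map_smul' := fun r a => LinearMap.ext fun β => by simp }
  map_add' u v := LinearMap.ext fun α => LinearMap.ext fun β => by simp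
  map_smul' r u := LinearMap.ext fun α => LinearMap.ext fun β => by simp

@[simp] theorem Jmap_apply (U' : Submodule ℝ U) (u : U) (α : ↥(AHDual (ImH)))
    (β : ↥(AHDual U')) : Jmap U' u α β = (α : ℍ →ₗ[ℝ] ℍ) ((β : U →ₗ[ℝ] ℍ) u) := rfl

theorem Jmap_mem (U' : Submodule ℝ U) (u : U) : Jmap U' u ∈ QTP (ImH) U' := by
  constructor
  · intro β
    exact ⟨(β : U →ₗ[ℝ] ℍ) u, fun α => rfl⟩
  · intro α
    refine ⟨((α : ℍ →ₗ[ℝ] ℍ) 1).re • u, fun β => ?_⟩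
    rw [Jmap_apply, AHDual_ImH_re α, iotaAH_apply, map_smul]

theorem alpha_eq_smul_id (α : ↥(AHDual (ImH))) :
    α = ((α : ℍ →ₗ[ℝ] ℍ) 1).re • alphaId :=
  Subtype.ext (LinearMap.ext fun x => by
    rw [AHDual_ImH_re α x]
    simp [alphaId])

set_option maxHeartbeats 1600000

/-- There is a canonical AH-isomorphism `ℍ ⊗_ℍ U ≅ U`, where `ℍ` carries
the AH-module structure `(ℍ, 𝕀)`: an `ℝ`-linear bijection which is `ℍ`-equivariant and
carries the primed part `(ℍ ⊗_ℍ U)'` onto `U'`. -/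
theorem qtp_H_left_unit (U' : Submodule ℝ U) (hAH : IsAH U') :
    ∃ e : ↥(QTP ImH U') ≃ₗ[ℝ] U,
      (∀ (c : ℍ) (x : ↥(QTP ImH U')),
        e ⟨hsmulBil ImH U' c ↑x, hsmulBil_mem c x.2⟩ = c • e x) ∧
      ((fun x => e x) '' QTPprimeSet ImH U' = (U' : Set U)) := by
  set J : U →ₗ[ℝ] ↥(QTP ImH U') :=
    (Jmap U').codRestrict (QTP ImH U') (Jmap_mem U') with hJ
  have hJcoe : ∀ u : U, (J u : ↥(AHDual (ImH)) →ₗ[ℝ] ↥(AHDual U') →ₗ[ℝ] ℍ) = Jmap U' u :=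
    fun u => rfl
  have hbij : Function.Bijective J := by
    constructor
    · intro u v huv
      rw [← sub_eq_zero]
      apply hAH
      intro β hβ
      have h0 : Jmap U' (u - v) = 0 := by
        rw [map_sub, sub_eq_zero]
        exact congrArg Subtype.val huv
      have := congrArg (fun B => B alphaId ⟨β, hβ⟩) h0
      simpa [alphaId] using this
    · intro B
      obtain ⟨u, hu⟩ := B.2.2 alphaId
      refine ⟨u, Subtype.ext (LinearMap.ext fun α => LinearMap.ext fun β => ?_)⟩
      rw [hJcoe, Jmap_apply, AHDual_ImH_re α]
      conv_rhs => rw [alpha_eq_smul_id α]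
      rw [map_smul]
      simp only [LinearMap.smul_apply]
      rw [hu β, iotaAH_apply]
  set eJ := LinearEquiv.ofBijective J hbij with heJ
  refine ⟨eJ.symm, ?_, ?_⟩
  · intro c x
    have hx : J (eJ.symm x) = x := eJ.apply_symm_apply x
    have hkey : (⟨hsmulBil ImH U' c ↑x, hsmulBil_mem c x.2⟩ : ↥(QTP ImH U')) =
        J (c • eJ.symm x) := by
      apply Subtype.ext
      rw [hJcoe]
      apply LinearMap.ext; intro α; apply LinearMap.ext; intro β
      rw [Jmap_apply]
      have hxcoe : (x : ↥(AHDual (ImH)) →ₗ[ℝ] ↥(AHDual U') →ₗ[ℝ] ℍ) = Jmap U' (eJ.symm x) := by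
        rw [← hJcoe, hx]
      rw [hsmulBil_apply, hxcoe, Jmap_apply]
      rw [β.2.1 c (eJ.symm x), AHDual_ImH_re α (c * (β : U →ₗ[ℝ] ℍ) (eJ.symm x)),
        AHDual_ImH_re α ((β : U →ₗ[ℝ] ℍ) (eJ.symm x)), mul_smul_comm]
    rw [hkey]
    exact eJ.symm_apply_apply (c • eJ.symm x)
  · apply Set.Subset.antisymm
    · rintro _ ⟨x, hx, rfl⟩
      set u := eJ.symm x with hu
      have hx2 : J u = x := eJ.apply_symm_apply x
      have hxcoe : (x : ↥(AHDual (ImH)) →ₗ[ℝ] ↥(AHDual U') →ₗ[ℝ] ℍ) = Jmap U' u :=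
        (congrArg Subtype.val hx2).symm
      apply mem_of_forall_dual_re hAH
      intro β hβ
      have := hx alphaId ⟨β, hβ⟩
      rw [hxcoe, Jmap_apply] at this
      simpa [alphaId] using this
    · intro u hu
      refine ⟨J u, ?_, eJ.symm_apply_apply u⟩
      intro α β
      rw [hJcoe, Jmap_apply, AHDual_ImH_re α]
      have hβ : ((β : U →ₗ[ℝ] ℍ) u).re = 0 := β.2.2 u hu
      simp [hβ]


end
end

section
/- Let φ : U → W and ψ : V → X be injective AH-morphisms between AH-modules. Then the induced map φ ⊗_ℍ ψ : U ⊗_ℍ V → W ⊗_ℍ X is an injective AH-morphism. -/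
open Module

local notation "ℍ" => Quaternion ℝ

noncomputable section

variable {U : Type*} [AddCommGroup U] [Module ℝ U] [Module ℍ U]
variable {V : Type*} [AddCommGroup V] [Module ℝ V] [Module ℍ V]
variable {W : Type*} [AddCommGroup W] [Module ℝ W] [Module ℍ W]
variable {X : Type*} [AddCommGroup X] [Module ℝ X] [Module ℍ X]

/-- The induced map `φ ⊗_ℍ ψ` on the ambient spaces of quaternionic tensor products,
given by precomposition with the dual maps `φ^×`, `ψ^×`. -/
def qtMap (U' : Submodule ℝ U) (V' : Submodule ℝ V)
    (W' : Submodule ℝ W) (X' : Submodule ℝ X)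
    (φ : U →ₗ[ℝ] W) (hφH : ∀ (c : ℍ) (u : U), φ (c • u) = c • φ u)
    (hφ' : ∀ u ∈ U', φ u ∈ W')
    (ψ : V →ₗ[ℝ] X) (hψH : ∀ (c : ℍ) (v : V), ψ (c • v) = c • ψ v)
    (hψ' : ∀ v ∈ V', ψ v ∈ X') :
    (↥(AHDual U') →ₗ[ℝ] ↥(AHDual V') →ₗ[ℝ] ℍ) →ₗ[ℝ]
      (↥(AHDual W') →ₗ[ℝ] ↥(AHDual X') →ₗ[ℝ] ℍ) where
  toFun B :=
    { toFun := fun γ => (B (dualPull U' W' φ hφH hφ' γ)).comp (dualPull V' X' ψ hψH hψ')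
      map_add' := fun γ γ' => LinearMap.ext fun δ => by simp [map_add]
      map_smul' := fun r γ => LinearMap.ext fun δ => by simp [map_smul] }
  map_add' := fun B C => LinearMap.ext fun γ => LinearMap.ext fun δ => by simp
  map_smul' := fun r B => LinearMap.ext fun γ => LinearMap.ext fun δ => by simp

/-- If `φ : U → W` and `ψ : V → X` are injective AH-morphisms, then
`φ ⊗_ℍ ψ : U ⊗_ℍ V → W ⊗_ℍ X` is an injective AH-morphism: it maps `U ⊗_ℍ V` into
`W ⊗_ℍ X`, is injective there, and maps the primed part into the primed part. -/
theorem qtMap_injective_AH_morphism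
    (U' : Submodule ℝ U) (V' : Submodule ℝ V)
    (W' : Submodule ℝ W) (X' : Submodule ℝ X)
    (hU : IsAH U') (hV : IsAH V') (hW : IsAH W') (hX : IsAH X')
    (φ : U →ₗ[ℝ] W) (hφH : ∀ (c : ℍ) (u : U), φ (c • u) = c • φ u)
    (hφ' : ∀ u ∈ U', φ u ∈ W') (hφinj : Function.Injective φ)
    (ψ : V →ₗ[ℝ] X) (hψH : ∀ (c : ℍ) (v : V), ψ (c • v) = c • ψ v)
    (hψ' : ∀ v ∈ V', ψ v ∈ X') (hψinj : Function.Injective ψ) :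
    (∀ B ∈ QTP U' V', qtMap U' V' W' X' φ hφH hφ' ψ hψH hψ' B ∈ QTP W' X') ∧
    (∀ B ∈ QTP U' V', ∀ C ∈ QTP U' V',
      qtMap U' V' W' X' φ hφH hφ' ψ hψH hψ' B = qtMap U' V' W' X' φ hφH hφ' ψ hψH hψ' C
        → B = C) ∧
    (∀ B ∈ QTP U' V', (∀ α β, (B α β).re = 0) →
      ∀ γ δ, (qtMap U' V' W' X' φ hφH hφ' ψ hψH hψ' B γ δ).re = 0) := by

  set Φ := dualPull U' W' φ hφH hφ' with hΦ
  set Ψ := dualPull V' X' ψ hψH hψ' with hΨ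
  have hq : ∀ (B : ↥(AHDual U') →ₗ[ℝ] ↥(AHDual V') →ₗ[ℝ] ℍ) γ δ,
      qtMap U' V' W' X' φ hφH hφ' ψ hψH hψ' B γ δ = B (Φ γ) (Ψ δ) := fun _ _ _ => rfl
  refine ⟨?_, ?_, ?_⟩
  · rintro B ⟨h1, h2⟩
    constructor
    · intro δ
      obtain ⟨u, hu⟩ := h1 (Ψ δ)
      exact ⟨φ u, fun γ => by rw [hq, hu (Φ γ)]; rfl⟩
    · intro γ
      obtain ⟨v, hv⟩ := h2 (Φ γ)
      exact ⟨ψ v, fun δ => by rw [hq, hv (Ψ δ)]; rfl⟩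
  · rintro B ⟨hB1, hB2⟩ C ⟨hC1, hC2⟩ hEq
    have key : ∀ α δ, B α (Ψ δ) = C α (Ψ δ) := by
      intro α δ
      obtain ⟨u, hu⟩ := hB1 (Ψ δ)
      obtain ⟨u', hu'⟩ := hC1 (Ψ δ)
      have hw : φ u - φ u' = 0 := by
        apply hW
        intro γ' hγ'
        have h := congrArg (fun F => F ⟨γ', hγ'⟩ δ) hEq
        simp only [hq] at h
        rw [hu (Φ ⟨γ', hγ'⟩), hu' (Φ ⟨γ', hγ'⟩)] at h
        have h' : γ' (φ u) = γ' (φ u') := h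
        rw [map_sub, h', sub_self]
      have huu : u = u' := hφinj (by rwa [sub_eq_zero] at hw)
      rw [hu α, hu' α, huu]
    refine LinearMap.ext fun α => LinearMap.ext fun β => ?_
    obtain ⟨v, hv⟩ := hB2 α
    obtain ⟨v', hv'⟩ := hC2 α
    have hw : ψ v - ψ v' = 0 := by
      apply hX
      intro δ' hδ'
      have h := key α ⟨δ', hδ'⟩
      rw [hv (Ψ ⟨δ', hδ'⟩), hv' (Ψ ⟨δ', hδ'⟩)] at h
      have h' : δ' (ψ v) = δ' (ψ v') := h
      rw [map_sub, h', sub_self]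
    have hvv : v = v' := hψinj (by rwa [sub_eq_zero] at hw)
    rw [hv β, hv' β, hvv]
  · intro B _ hB γ δ
    rw [hq]
    exact hB (Φ γ) (Ψ δ)

end
end

section
/- For nonzero imaginary quaternion q, let X_q be the AH-module (ℍ, X_q') where X_q' = {p ∈ ℍ : pq = -qp}. Then X_q ⊗_ℍ X_q is AH-isomorphic to X_q. -/
open Module

local notation "ℍ" => Quaternion ℝ

noncomputable section

variable {U : Type*} [AddCommGroup U] [Module ℝ U] [Module ℍ U]
variable {V : Type*} [AddCommGroup V] [Module ℝ V] [Module ℍ V]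
variable {W : Type*} [AddCommGroup W] [Module ℝ W] [Module ℍ W]
variable {X : Type*} [AddCommGroup X] [Module ℝ X] [Module ℍ X]

section Aux

/-- For `U = ℍ`, every `α ∈ AHDual U'` is right multiplication by `α 1`. -/
theorem alpha_apply {U' : Submodule ℝ ℍ} (α : ↥(AHDual U')) (u : ℍ) :
    (α : ℍ →ₗ[ℝ] ℍ) u = u * (α : ℍ →ₗ[ℝ] ℍ) 1 := by
  have h := α.2.1 u 1
  rwa [smul_eq_mul, mul_one] at h

theorem re_mul_q {q : ℍ} {p : ℍ} (hp : p ∈ XqP q) : (p * q).re = 0 := by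
  have h : p * q = -(q * p) := hp
  have h2 := congrArg QuaternionAlgebra.re h
  simp only [Quaternion.re_neg, Quaternion.re_mul] at h2
  simp only [Quaternion.re_mul]
  linarith

noncomputable def uu1 (q : ℍ) : ℍ := ⟨0, 0, q.imK, -q.imJ⟩
noncomputable def uu2 (q : ℍ) : ℍ := ⟨0, -q.imK, 0, q.imI⟩
noncomputable def uu3 (q : ℍ) : ℍ := ⟨0, q.imJ, -q.imI, 0⟩

theorem uu1_mem (q : ℍ) (hq : q.re = 0) : uu1 q ∈ XqP q := by
  show uu1 q * q = -(q * uu1 q); ext <;> simp only [Quaternion.re_mul, Quaternion.imI_mul, Quaternion.imJ_mul, Quaternion.imK_mul, Quaternion.re_neg, Quaternion.imI_neg, Quaternion.imJ_neg, Quaternion.imK_neg] <;> simp [uu1, hq] <;> ring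

theorem uu2_mem (q : ℍ) (hq : q.re = 0) : uu2 q ∈ XqP q := by
  show uu2 q * q = -(q * uu2 q); ext <;> simp only [Quaternion.re_mul, Quaternion.imI_mul, Quaternion.imJ_mul, Quaternion.imK_mul, Quaternion.re_neg, Quaternion.imI_neg, Quaternion.imJ_neg, Quaternion.imK_neg] <;> simp [uu2, hq] <;> ring

theorem uu3_mem (q : ℍ) (hq : q.re = 0) : uu3 q ∈ XqP q := by
  show uu3 q * q = -(q * uu3 q); ext <;> simp only [Quaternion.re_mul, Quaternion.imI_mul, Quaternion.imJ_mul, Quaternion.imK_mul, Quaternion.re_neg, Quaternion.imI_neg, Quaternion.imJ_neg, Quaternion.imK_neg] <;> simp [uu3, hq] <;> ring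

/-- Structure theorem for the dual of `X_q`: every element is right multiplication by
an element of `span {1, q}`. -/
theorem alpha_one_eq {q : ℍ} (hq : q.re = 0) (hq0 : q ≠ 0) (α : ↥(AHDual (XqP q))) :
    ∃ s t : ℝ, (α : ℍ →ₗ[ℝ] ℍ) 1 = (s : ℍ) + t • q := by
  set p := (α : ℍ →ₗ[ℝ] ℍ) 1 with hp
  have h1 := α.2.2 _ (uu1_mem q hq)
  have h2 := α.2.2 _ (uu2_mem q hq)
  have h3 := α.2.2 _ (uu3_mem q hq)
  rw [alpha_apply] at h1 h2 h3
  simp only [Quaternion.re_mul] at h1 h2 h3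
  simp only [uu1, uu2, uu3] at h1 h2 h3
  have e1 : q.imK * p.imJ = q.imJ * p.imK := by linarith
  have e2 : q.imK * p.imI = q.imI * p.imK := by linarith
  have e3 : q.imJ * p.imI = q.imI * p.imJ := by linarith
  have hcomp : q.imI ≠ 0 ∨ q.imJ ≠ 0 ∨ q.imK ≠ 0 := by
    by_contra hc
    push_neg at hc
    exact hq0 (by ext <;> simp [hq, hc.1, hc.2.1, hc.2.2, Quaternion.re_zero, Quaternion.imI_zero, Quaternion.imJ_zero, Quaternion.imK_zero])
  rcases hcomp with ha | hb | hc
  · refine ⟨p.re, p.imI / q.imI, ?_⟩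
    ext <;> simp [hq] <;> field_simp <;> linarith
  · refine ⟨p.re, p.imJ / q.imJ, ?_⟩
    ext <;> simp [hq] <;> field_simp <;> linarith
  · refine ⟨p.re, p.imK / q.imK, ?_⟩
    ext <;> simp [hq] <;> field_simp <;> linarith

theorem span_mul {q : ℍ} (hq : q.re = 0) (s t s' t' : ℝ) :
    ((s:ℍ) + t • q) * ((s':ℍ) + t' • q) =
      ((s*s' - t*t'*(q.imI*q.imI+q.imJ*q.imJ+q.imK*q.imK) : ℝ) : ℍ) + (s*t' + t*s') • q := by
  ext <;> simp [hq, Quaternion.re_mul, Quaternion.imI_mul, Quaternion.imJ_mul, Quaternion.imK_mul] <;> ring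

theorem dual_one_comm {q : ℍ} (hq : q.re = 0) (hq0 : q ≠ 0)
    (α β : ↥(AHDual (XqP q))) :
    (α : ℍ →ₗ[ℝ] ℍ) 1 * (β : ℍ →ₗ[ℝ] ℍ) 1 = (β : ℍ →ₗ[ℝ] ℍ) 1 * (α : ℍ →ₗ[ℝ] ℍ) 1 := by
  obtain ⟨s, t, hα⟩ := alpha_one_eq hq hq0 α
  obtain ⟨s', t', hβ⟩ := alpha_one_eq hq hq0 β
  rw [hα, hβ, span_mul hq, span_mul hq]
  ring_nf

theorem iota_one {q : ℍ} (hq : q.re = 0) (hq0 : q ≠ 0) :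
    ((idXqDual q : ↥(AHDual (XqP q))) : ℍ →ₗ[ℝ] ℍ) 1 = 1 := by
  rw [idXqDual, dif_pos ⟨hq, hq0⟩]
  rfl

/-- Right multiplication by `q`, as an element of the dual of `X_q`. -/
noncomputable def betaq (q : ℍ) (hq : q.re = 0) : ↥(AHDual (XqP q)) :=
  ⟨{ toFun := fun u => u * q
     map_add' := fun a b => add_mul a b q
     map_smul' := fun r a => smul_mul_assoc r a q },
   ⟨fun c u => by simp [smul_eq_mul, mul_assoc],
    fun u hu => re_mul_q hu⟩⟩

theorem betaq_one {q : ℍ} (hq : q.re = 0) :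
    ((betaq q hq : ↥(AHDual (XqP q))) : ℍ →ₗ[ℝ] ℍ) 1 = q := by
  show (1 : ℍ) * q = q
  rw [one_mul]

/-- The key structure formula for elements of `X_q ⊗_ℍ X_q`. -/
theorem qtp_apply {q : ℍ} (hq : q.re = 0) (hq0 : q ≠ 0)
    {B : ↥(AHDual (XqP q)) →ₗ[ℝ] ↥(AHDual (XqP q)) →ₗ[ℝ] ℍ}
    (hB : B ∈ QTP (XqP q) (XqP q)) (α β : ↥(AHDual (XqP q))) :
    B α β = B (idXqDual q) (idXqDual q) * (β : ℍ →ₗ[ℝ] ℍ) 1 * (α : ℍ →ₗ[ℝ] ℍ) 1 := by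
  obtain ⟨hB1, hB2⟩ := hB
  obtain ⟨u, hu⟩ := hB1 β
  obtain ⟨v, hv⟩ := hB2 (idXqDual q)
  have e1 : B α β = u * (α : ℍ →ₗ[ℝ] ℍ) 1 := by
    rw [hu α, iotaAH_apply, alpha_apply]
  have e2 : B (idXqDual q) β = u := by
    rw [hu (idXqDual q), iotaAH_apply, alpha_apply, iota_one hq hq0, mul_one]
  have e3 : B (idXqDual q) β = v * (β : ℍ →ₗ[ℝ] ℍ) 1 := by
    rw [hv β, iotaAH_apply, alpha_apply]
  have e4 : B (idXqDual q) (idXqDual q) = v := by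
    rw [hv (idXqDual q), iotaAH_apply, alpha_apply, iota_one hq hq0, mul_one]
  rw [e1, ← e2, e3, e4, mul_assoc]

/-- The inverse map `ℍ → X_q ⊗_ℍ X_q`. -/
noncomputable def Bmk (q : ℍ) (p : ℍ) :
    ↥(AHDual (XqP q)) →ₗ[ℝ] ↥(AHDual (XqP q)) →ₗ[ℝ] ℍ where
  toFun α :=
    { toFun := fun β => p * (β : ℍ →ₗ[ℝ] ℍ) 1 * (α : ℍ →ₗ[ℝ] ℍ) 1
      map_add' := fun a b => by simp [mul_add, add_mul]
      map_smul' := fun r a => by simp [mul_smul_comm, smul_mul_assoc] }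
  map_add' := fun a b => LinearMap.ext fun β => by simp [mul_add]
  map_smul' := fun r a => LinearMap.ext fun β => by simp [mul_smul_comm]

@[simp] theorem Bmk_apply (q p : ℍ) (α β : ↥(AHDual (XqP q))) :
    Bmk q p α β = p * (β : ℍ →ₗ[ℝ] ℍ) 1 * (α : ℍ →ₗ[ℝ] ℍ) 1 := rfl

theorem Bmk_mem {q : ℍ} (hq : q.re = 0) (hq0 : q ≠ 0) (p : ℍ) :
    Bmk q p ∈ QTP (XqP q) (XqP q) := by
  constructor
  · intro β
    refine ⟨p * (β : ℍ →ₗ[ℝ] ℍ) 1, fun α => ?_⟩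
    rw [iotaAH_apply, alpha_apply, Bmk_apply]
  · intro α
    refine ⟨p * (α : ℍ →ₗ[ℝ] ℍ) 1, fun β => ?_⟩
    rw [iotaAH_apply, alpha_apply, Bmk_apply, mul_assoc, mul_assoc,
      dual_one_comm hq hq0]

theorem mem_XqP_of_re {q : ℍ} (hq : q.re = 0) {x : ℍ}
    (h1 : x.re = 0) (h2 : (x * q).re = 0) : x ∈ XqP q := by
  have h3 : x.imI*q.imI + x.imJ*q.imJ + x.imK*q.imK = 0 := by
    simp only [Quaternion.re_mul, h1, hq] at h2
    linarith
  show x * q = -(q * x)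
  ext <;> simp [hq, h1, Quaternion.re_mul, Quaternion.imI_mul, Quaternion.imJ_mul, Quaternion.imK_mul] <;> ring_nf <;> linarith

theorem re_mul_span {q : ℍ} (hq : q.re = 0) (hq0 : q ≠ 0) {p : ℍ}
    (hp : p ∈ XqP q) (s t : ℝ) : (p * ((s:ℍ) + t • q)).re = 0 := by
  have h1 : p.re = 0 := XqP_le_im hq hq0 p hp
  have h2 : (p * q).re = 0 := re_mul_q hp
  rw [mul_add, mul_smul_comm, ← Quaternion.mul_coe_eq_smul]
  simp [h1, h2]

end Aux

/-- For a nonzero imaginary quaternion `q`, the quaternionic tensor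
product `X_q ⊗_ℍ X_q` is AH-isomorphic to `X_q`. -/
theorem xq_tensor_xq (q : ℍ) (hq : q.re = 0) (hq0 : q ≠ 0) :
    ∃ e : ↥(QTP (XqP q) (XqP q)) ≃ₗ[ℝ] ℍ,
      (∀ (c : ℍ) (x : ↥(QTP (XqP q) (XqP q))),
        e ⟨hsmulBil (XqP q) (XqP q) c ↑x, hsmulBil_mem c x.2⟩ = c * e x) ∧
      ((fun x => e x) '' QTPprimeSet (XqP q) (XqP q) = (XqP q : Set ℍ)) := by
  refine ⟨{ toFun := fun x => (x : ↥(AHDual (XqP q)) →ₗ[ℝ] ↥(AHDual (XqP q)) →ₗ[ℝ] ℍ)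
              (idXqDual q) (idXqDual q)
            map_add' := fun x y => by simp
            map_smul' := fun r x => by simp
            invFun := fun p => ⟨Bmk q p, Bmk_mem hq hq0 p⟩
            left_inv := ?_
            right_inv := ?_ }, ?_, ?_⟩
  · intro x
    apply Subtype.ext
    apply LinearMap.ext; intro α
    apply LinearMap.ext; intro β
    rw [Bmk_apply]
    exact (qtp_apply hq hq0 x.2 α β).symm
  · intro p
    show Bmk q p (idXqDual q) (idXqDual q) = p
    rw [Bmk_apply, iota_one hq hq0, mul_one, mul_one]
  · intro c x
    rfl
  · ext p
    constructor
    · rintro ⟨B, hB, rfl⟩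
      have hx1 : ((B : ↥(QTP (XqP q) (XqP q))).1 (idXqDual q) (idXqDual q)).re = 0 :=
        hB (idXqDual q) (idXqDual q)
      have hx2 : ((B.1 (idXqDual q) (idXqDual q)) * q).re = 0 := by
        have h := hB (idXqDual q) (betaq q hq)
        rwa [qtp_apply hq hq0 B.2 (idXqDual q) (betaq q hq), betaq_one hq,
          iota_one hq hq0, mul_one] at h
      exact mem_XqP_of_re hq hx1 hx2
    · intro hp
      refine ⟨⟨Bmk q p, Bmk_mem hq hq0 p⟩, fun α β => ?_, ?_⟩
      · obtain ⟨s, t, hβ⟩ := alpha_one_eq hq hq0 β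
        obtain ⟨s', t', hα⟩ := alpha_one_eq hq hq0 α
        show (Bmk q p α β).re = 0
        rw [Bmk_apply, hβ, hα, mul_assoc, span_mul hq]
        exact re_mul_span hq hq0 hp _ _
      · show Bmk q p (idXqDual q) (idXqDual q) = p
        rw [Bmk_apply, iota_one hq hq0, mul_one, mul_one]

end
end

section
/- Let q be a nonzero imaginary quaternion and U a finite-dimensional AH-module. Then the quaternionic tensor product U ⊗_ℍ X_q is AH-isomorphic to a direct sum of n copies of X_q for some integer n ≥ 0. -/
open Module

local notation "ℍ" => Quaternion ℝ

noncomputable section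

variable {U : Type*} [AddCommGroup U] [Module ℝ U] [Module ℍ U]
variable {V : Type*} [AddCommGroup V] [Module ℝ V] [Module ℍ V]
variable {W : Type*} [AddCommGroup W] [Module ℝ W] [Module ℍ W]
variable {X : Type*} [AddCommGroup X] [Module ℝ X] [Module ℍ X]

namespace QtpXqAux

/-! ### Quaternion computations -/

theorem re_mul_comm (x y : ℍ) : (x * y).re = (y * x).re := by
  simp only [Quaternion.re_mul]; ring

theorem imag_mul_self {x : ℍ} (hx : x.re = 0) : x * x = -((Quaternion.normSq x : ℝ) : ℍ) := by
  have hs : star x = -x := by ext <;> simp [hx]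
  rw [← Quaternion.self_mul_star, hs, mul_neg, neg_neg]

theorem anticomm_iff {q : ℍ} (hq : q.re = 0) {x : ℍ}
    (hx : x.re = 0) (hxq : (x * q).re = 0) : x * q = -(q * x) := by
  ext
  · rw [Quaternion.re_neg, re_mul_comm q x, hxq, neg_zero]
  · simp [Quaternion.imI_mul, hx, hq]; ring
  · simp [Quaternion.imJ_mul, hx, hq]; ring
  · simp [Quaternion.imK_mul, hx, hq]; ring

theorem mem_XqP_iff {q : ℍ} (hq : q.re = 0) (hq0 : q ≠ 0) {x : ℍ} :
    x ∈ XqP q ↔ x.re = 0 ∧ (x * q).re = 0 := by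
  constructor
  · intro h
    have h' : x * q = -(q * x) := h
    refine ⟨XqP_le_im hq hq0 x h, ?_⟩
    have h2 : (x * q).re = -((q * x).re) := by rw [h']; simp
    rw [re_mul_comm q x] at h2
    linarith
  · rintro ⟨hx, hxq⟩
    exact anticomm_iff hq hx hxq

theorem exists_anticomm {q : ℍ} (hq : q.re = 0) :
    ∃ p : ℍ, p ≠ 0 ∧ p * q = -(q * p) := by
  by_cases h : q.imI = 0 ∧ q.imJ = 0
  · refine ⟨⟨0,1,0,0⟩, ?_, ?_⟩
    · intro hcon
      have := congrArg QuaternionAlgebra.imI hcon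
      exact one_ne_zero this
    · apply anticomm_iff hq rfl
      refine (Quaternion.re_mul _ _).trans ?_
      simp only [hq, h.1, h.2]
      ring
  · refine ⟨⟨0, -q.imJ, q.imI, 0⟩, ?_, ?_⟩
    · intro hcon
      apply h
      have h1 := congrArg QuaternionAlgebra.imI hcon
      have h2 := congrArg QuaternionAlgebra.imJ hcon
      simp at h1 h2
      exact ⟨h2, neg_eq_zero.mp h1⟩
    · apply anticomm_iff hq rfl
      refine (Quaternion.re_mul _ _).trans ?_
      simp only [hq]
      ring

theorem dual_char {q : ℍ} (hq : q.re = 0) (hq0 : q ≠ 0) {p : ℍ}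
    (h : ∀ x ∈ XqP q, (x * p).re = 0) : ∃ s t : ℝ, p = (s : ℍ) + t • q := by
  have hN0 : q.imI^2 + q.imJ^2 + q.imK^2 ≠ 0 := by
    intro h0
    apply hq0
    ext <;> simp [hq, Quaternion.re_zero, Quaternion.imI_zero, Quaternion.imJ_zero, Quaternion.imK_zero] <;>
      nlinarith [sq_nonneg q.imI, sq_nonneg q.imJ, sq_nonneg q.imK]
  have hx : (⟨0, (q.imI^2+q.imJ^2+q.imK^2)*p.imI - (p.imI*q.imI+p.imJ*q.imJ+p.imK*q.imK)*q.imI,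
      (q.imI^2+q.imJ^2+q.imK^2)*p.imJ - (p.imI*q.imI+p.imJ*q.imJ+p.imK*q.imK)*q.imJ,
      (q.imI^2+q.imJ^2+q.imK^2)*p.imK - (p.imI*q.imI+p.imJ*q.imJ+p.imK*q.imK)*q.imK⟩ : ℍ) ∈ XqP q := by
    refine (mem_XqP_iff hq hq0).2 ⟨rfl, ?_⟩
    refine (Quaternion.re_mul _ _).trans ?_
    simp only [hq]
    ring
  have key : (q.imI^2+q.imJ^2+q.imK^2) * (p.imI^2+p.imJ^2+p.imK^2)
      - (p.imI*q.imI+p.imJ*q.imJ+p.imK*q.imK)^2 = 0 := by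
    have k := (Quaternion.re_mul _ _).symm.trans (h _ hx)
    simp only [hq] at k
    linear_combination -k
  have h1 : ((q.imI^2+q.imJ^2+q.imK^2)*p.imI - (p.imI*q.imI+p.imJ*q.imJ+p.imK*q.imK)*q.imI)^2
      + ((q.imI^2+q.imJ^2+q.imK^2)*p.imJ - (p.imI*q.imI+p.imJ*q.imJ+p.imK*q.imK)*q.imJ)^2
      + ((q.imI^2+q.imJ^2+q.imK^2)*p.imK - (p.imI*q.imI+p.imJ*q.imJ+p.imK*q.imK)*q.imK)^2 = 0 := by
    linear_combination (q.imI^2+q.imJ^2+q.imK^2) * key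
  have e1 : (q.imI^2+q.imJ^2+q.imK^2)*p.imI - (p.imI*q.imI+p.imJ*q.imJ+p.imK*q.imK)*q.imI = 0 := by
    have s1 : ((q.imI^2+q.imJ^2+q.imK^2)*p.imI - (p.imI*q.imI+p.imJ*q.imJ+p.imK*q.imK)*q.imI)^2 = 0 := by
      linarith [h1, sq_nonneg ((q.imI^2+q.imJ^2+q.imK^2)*p.imI - (p.imI*q.imI+p.imJ*q.imJ+p.imK*q.imK)*q.imI),
        sq_nonneg ((q.imI^2+q.imJ^2+q.imK^2)*p.imJ - (p.imI*q.imI+p.imJ*q.imJ+p.imK*q.imK)*q.imJ),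
        sq_nonneg ((q.imI^2+q.imJ^2+q.imK^2)*p.imK - (p.imI*q.imI+p.imJ*q.imJ+p.imK*q.imK)*q.imK)]
    exact pow_eq_zero_iff (two_ne_zero) |>.mp s1
  have e2 : (q.imI^2+q.imJ^2+q.imK^2)*p.imJ - (p.imI*q.imI+p.imJ*q.imJ+p.imK*q.imK)*q.imJ = 0 := by
    have s1 : ((q.imI^2+q.imJ^2+q.imK^2)*p.imJ - (p.imI*q.imI+p.imJ*q.imJ+p.imK*q.imK)*q.imJ)^2 = 0 := by
      linarith [h1, sq_nonneg ((q.imI^2+q.imJ^2+q.imK^2)*p.imI - (p.imI*q.imI+p.imJ*q.imJ+p.imK*q.imK)*q.imI),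
        sq_nonneg ((q.imI^2+q.imJ^2+q.imK^2)*p.imJ - (p.imI*q.imI+p.imJ*q.imJ+p.imK*q.imK)*q.imJ),
        sq_nonneg ((q.imI^2+q.imJ^2+q.imK^2)*p.imK - (p.imI*q.imI+p.imJ*q.imJ+p.imK*q.imK)*q.imK)]
    exact pow_eq_zero_iff (two_ne_zero) |>.mp s1
  have e3 : (q.imI^2+q.imJ^2+q.imK^2)*p.imK - (p.imI*q.imI+p.imJ*q.imJ+p.imK*q.imK)*q.imK = 0 := by
    have s1 : ((q.imI^2+q.imJ^2+q.imK^2)*p.imK - (p.imI*q.imI+p.imJ*q.imJ+p.imK*q.imK)*q.imK)^2 = 0 := by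
      linarith [h1, sq_nonneg ((q.imI^2+q.imJ^2+q.imK^2)*p.imI - (p.imI*q.imI+p.imJ*q.imJ+p.imK*q.imK)*q.imI),
        sq_nonneg ((q.imI^2+q.imJ^2+q.imK^2)*p.imJ - (p.imI*q.imI+p.imJ*q.imJ+p.imK*q.imK)*q.imJ),
        sq_nonneg ((q.imI^2+q.imJ^2+q.imK^2)*p.imK - (p.imI*q.imI+p.imJ*q.imJ+p.imK*q.imK)*q.imK)]
    exact pow_eq_zero_iff (two_ne_zero) |>.mp s1
  refine ⟨p.re, (p.imI*q.imI+p.imJ*q.imJ+p.imK*q.imK) / (q.imI^2+q.imJ^2+q.imK^2), ?_⟩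
  ext
  · simp [hq]
  · simp [hq]; field_simp; linarith [e1]
  · simp [hq]; field_simp; linarith [e2]
  · simp [hq]; field_simp; linarith [e3]

theorem comm_part {q : ℍ} (hq : q.re = 0) (hq0 : q ≠ 0) (c : ℍ) :
    ((2⁻¹:ℝ) • (c - ((Quaternion.normSq q)⁻¹ : ℝ) • (q * c * q))) * q
      = q * ((2⁻¹:ℝ) • (c - ((Quaternion.normSq q)⁻¹ : ℝ) • (q * c * q))) := by
  have hN : (Quaternion.normSq q)⁻¹ * Quaternion.normSq q = 1 :=
    inv_mul_cancel₀ (Quaternion.normSq_ne_zero.2 hq0)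
  have h1 : q * c * q * q = -(Quaternion.normSq q • (q * c)) := by
    rw [mul_assoc, imag_mul_self hq, mul_neg, Quaternion.mul_coe_eq_smul]
  have h2 : q * (q * c * q) = -(Quaternion.normSq q • (c * q)) := by
    rw [show q * (q * c * q) = q * q * (c * q) by noncomm_ring, imag_mul_self hq, neg_mul,
      Quaternion.coe_mul_eq_smul]
  rw [smul_mul_assoc, mul_smul_comm, sub_mul, mul_sub, smul_mul_assoc, mul_smul_comm, h1, h2]
  rw [smul_neg, smul_neg, smul_smul, smul_smul, hN, one_smul, one_smul]
  module

theorem anti_part {q : ℍ} (hq : q.re = 0) (hq0 : q ≠ 0) (c : ℍ) :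
    (c - (2⁻¹:ℝ) • (c - ((Quaternion.normSq q)⁻¹ : ℝ) • (q * c * q))) * q
      = -(q * (c - (2⁻¹:ℝ) • (c - ((Quaternion.normSq q)⁻¹ : ℝ) • (q * c * q)))) := by
  have hN : (Quaternion.normSq q)⁻¹ * Quaternion.normSq q = 1 :=
    inv_mul_cancel₀ (Quaternion.normSq_ne_zero.2 hq0)
  have h1 : q * c * q * q = -(Quaternion.normSq q • (q * c)) := by
    rw [mul_assoc, imag_mul_self hq, mul_neg, Quaternion.mul_coe_eq_smul]
  have h2 : q * (q * c * q) = -(Quaternion.normSq q • (c * q)) := by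
    rw [show q * (q * c * q) = q * q * (c * q) by noncomm_ring, imag_mul_self hq, neg_mul,
      Quaternion.coe_mul_eq_smul]
  rw [sub_mul, mul_sub, smul_mul_assoc, mul_smul_comm, sub_mul, mul_sub, smul_mul_assoc,
    mul_smul_comm, h1, h2]
  rw [smul_neg, smul_neg, smul_smul, smul_smul, hN, one_smul, one_smul]
  module

theorem qn_mul_self {q : ℍ} (hq : q.re = 0) (hq0 : q ≠ 0) :
    (‖q‖⁻¹ • q) * (‖q‖⁻¹ • q) = -1 := by
  have hn : ‖q‖⁻¹ * ‖q‖⁻¹ * (‖q‖ * ‖q‖) = 1 := by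
    field_simp [norm_ne_zero_iff.mpr hq0]
  rw [smul_mul_smul_comm, imag_mul_self hq, smul_neg, Quaternion.smul_coe,
    Quaternion.normSq_eq_norm_mul_self, hn, Quaternion.coe_one]

/-- The embedding `ℂ → ℍ` sending `i` to `q/‖q‖`. -/
def zeta (q : ℍ) (hq : q.re = 0) (hq0 : q ≠ 0) : ℂ →ₐ[ℝ] ℍ :=
  Complex.liftAux (‖q‖⁻¹ • q) (qn_mul_self hq hq0)

theorem zeta_apply (q : ℍ) (hq : q.re = 0) (hq0 : q ≠ 0) (z : ℂ) :
    zeta q hq hq0 z = (z.re : ℍ) + z.im • (‖q‖⁻¹ • q) := by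
  rw [zeta, Complex.liftAux_apply]
  rfl

theorem zeta_comm (q : ℍ) (hq : q.re = 0) (hq0 : q ≠ 0) (z : ℂ) :
    zeta q hq hq0 z * q = q * zeta q hq hq0 z := by
  rw [zeta_apply, add_mul, mul_add, Quaternion.coe_mul_eq_smul, Quaternion.mul_coe_eq_smul,
    smul_mul_assoc, smul_mul_assoc, mul_smul_comm, mul_smul_comm]

/-! ### The submodules `M₊` and `M₋` of `U` -/

variable {U : Type*} [AddCommGroup U] [Module ℝ U] [Module ℍ U]

theorem alpha_hsmul {U' : Submodule ℝ U} (α : ↥(AHDual U')) (c : ℍ) (u : U) :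
    (α : U →ₗ[ℝ] ℍ) (c • u) = c * (α : U →ₗ[ℝ] ℍ) u := α.2.1 c u

variable (U' : Submodule ℝ U) (q : ℍ)

/-- Elements of `U` on which every dual element takes values commuting with `q`. -/
def Mpl : Submodule ℝ U where
  carrier := {u | ∀ α : ↥(AHDual U'), (α : U →ₗ[ℝ] ℍ) u * q = q * ((α : U →ₗ[ℝ] ℍ) u)}
  zero_mem' := by intro α; simp
  add_mem' := by
    intro u v hu hv α
    rw [map_add, add_mul, mul_add, hu α, hv α]
  smul_mem' := by
    intro r u hu α
    rw [map_smul, smul_mul_assoc, mul_smul_comm, hu α]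

/-- Elements of `U` on which every dual element takes values anticommuting with `q`. -/
def Mmi : Submodule ℝ U where
  carrier := {u | ∀ α : ↥(AHDual U'), (α : U →ₗ[ℝ] ℍ) u * q = -(q * ((α : U →ₗ[ℝ] ℍ) u))}
  zero_mem' := by intro α; simp
  add_mem' := by
    intro u v hu hv α
    rw [map_add, add_mul, mul_add, hu α, hv α, neg_add]
  smul_mem' := by
    intro r u hu α
    rw [map_smul, smul_mul_assoc, mul_smul_comm, hu α, smul_neg]

variable {U' q}

theorem smul_mem_Mpl_of_comm {c : ℍ} (hc : c * q = q * c) {u : U} (hu : u ∈ Mpl U' q) :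
    c • u ∈ Mpl U' q := by
  intro α
  rw [alpha_hsmul, mul_assoc, hu α, ← mul_assoc, hc, mul_assoc]

theorem smul_mem_Mmi_of_anti {c : ℍ} (hc : c * q = -(q * c)) {u : U} (hu : u ∈ Mpl U' q) :
    c • u ∈ Mmi U' q := by
  intro α
  rw [alpha_hsmul, mul_assoc, hu α, ← mul_assoc, hc, neg_mul, mul_assoc]

theorem smul_mem_Mpl_of_anti {c : ℍ} (hc : c * q = -(q * c)) {u : U} (hu : u ∈ Mmi U' q) :
    c • u ∈ Mpl U' q := by
  intro α
  rw [alpha_hsmul, mul_assoc, hu α, mul_neg, ← mul_assoc, hc, neg_mul, neg_neg, mul_assoc]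

theorem decomp {q : ℍ} (hq : q.re = 0) (hq0 : q ≠ 0) {U' : Submodule ℝ U} {u w : U}
    (hw : ∀ α : ↥(AHDual U'), (α : U →ₗ[ℝ] ℍ) u * q = (α : U →ₗ[ℝ] ℍ) w) :
    ∃ u₁ u₂ : U, u₁ ∈ Mpl U' q ∧ u₂ ∈ Mmi U' q ∧ u₁ + u₂ = u := by
  refine ⟨(2⁻¹:ℝ) • u - ((2⁻¹ * (Quaternion.normSq q)⁻¹ : ℝ)) • (q • w),
          (2⁻¹:ℝ) • u + ((2⁻¹ * (Quaternion.normSq q)⁻¹ : ℝ)) • (q • w), ?_, ?_, ?_⟩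
  · intro α
    have hqw : (α : U →ₗ[ℝ] ℍ) (q • w) = q * (α : U →ₗ[ℝ] ℍ) u * q := by
      rw [alpha_hsmul, ← hw α, mul_assoc]
    have hα : (α : U →ₗ[ℝ] ℍ) ((2⁻¹:ℝ) • u - ((2⁻¹ * (Quaternion.normSq q)⁻¹ : ℝ)) • (q • w))
        = (2⁻¹:ℝ) • ((α : U →ₗ[ℝ] ℍ) u
            - ((Quaternion.normSq q)⁻¹ : ℝ) • (q * (α : U →ₗ[ℝ] ℍ) u * q)) := by
      rw [map_sub, map_smul, map_smul, hqw]
      module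
    rw [hα]
    exact comm_part hq hq0 _
  · intro α
    have hqw : (α : U →ₗ[ℝ] ℍ) (q • w) = q * (α : U →ₗ[ℝ] ℍ) u * q := by
      rw [alpha_hsmul, ← hw α, mul_assoc]
    have hα : (α : U →ₗ[ℝ] ℍ) ((2⁻¹:ℝ) • u + ((2⁻¹ * (Quaternion.normSq q)⁻¹ : ℝ)) • (q • w))
        = (α : U →ₗ[ℝ] ℍ) u - (2⁻¹:ℝ) • ((α : U →ₗ[ℝ] ℍ) u
            - ((Quaternion.normSq q)⁻¹ : ℝ) • (q * (α : U →ₗ[ℝ] ℍ) u * q)) := by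
      rw [map_add, map_smul, map_smul, hqw]
      module
    rw [hα]
    exact anti_part hq hq0 _
  · rw [sub_add_add_cancel, ← add_smul]
    norm_num

/-! ### The map `(Fin n → ℍ) → U` determined by a family of vectors -/

section Lmap

variable [IsScalarTower ℝ ℍ U]

/-- `c ↦ ∑ i, c i • v i` as a real-linear map. -/
def Lmap {n : ℕ} (v : Fin n → U) : (Fin n → ℍ) →ₗ[ℝ] U where
  toFun c := ∑ i, c i • v i
  map_add' c d := by simp [add_smul, Finset.sum_add_distrib]
  map_smul' r c := by simp [Finset.smul_sum, smul_assoc]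

theorem Lmap_apply {n : ℕ} (v : Fin n → U) (c : Fin n → ℍ) :
    Lmap v c = ∑ i, c i • v i := rfl

theorem Lmap_alpha {U' : Submodule ℝ U} {n : ℕ} (v : Fin n → U) (c : Fin n → ℍ)
    (α : ↥(AHDual U')) :
    (α : U →ₗ[ℝ] ℍ) (Lmap v c) = ∑ i, c i * (α : U →ₗ[ℝ] ℍ) (v i) := by
  rw [Lmap_apply, map_sum]
  exact Finset.sum_congr rfl fun i _ => alpha_hsmul α (c i) (v i)

theorem Lmap_mul {n : ℕ} (v : Fin n → U) (c : Fin n → ℍ) (p : ℍ) :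
    Lmap v (fun i => p * c i) = p • Lmap v c := by
  rw [Lmap_apply, Lmap_apply, Finset.smul_sum]
  exact Finset.sum_congr rfl fun i _ => by rw [mul_smul]

theorem Lmap_mem_Mpl {U' : Submodule ℝ U} {n : ℕ} {v : Fin n → U} {c : Fin n → ℍ}
    (hv : ∀ i, v i ∈ Mpl U' q) (hc : ∀ i, c i * q = q * c i) : Lmap v c ∈ Mpl U' q := by
  rw [Lmap_apply]
  exact Submodule.sum_mem _ fun i _ => smul_mem_Mpl_of_comm (hc i) (hv i)

theorem Lmap_mem_Mmi {U' : Submodule ℝ U} {n : ℕ} {v : Fin n → U} {c : Fin n → ℍ}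
    (hv : ∀ i, v i ∈ Mpl U' q) (hc : ∀ i, c i * q = -(q * c i)) : Lmap v c ∈ Mmi U' q := by
  rw [Lmap_apply]
  exact Submodule.sum_mem _ fun i _ => smul_mem_Mmi_of_anti (hc i) (hv i)

theorem Lmap_witness {U' : Submodule ℝ U} {n : ℕ} {v : Fin n → U}
    (hv : ∀ i, v i ∈ Mpl U' q) (c : Fin n → ℍ) (α : ↥(AHDual U')) :
    (α : U →ₗ[ℝ] ℍ) (Lmap v c) * q = (α : U →ₗ[ℝ] ℍ) (Lmap v (fun i => c i * q)) := by
  rw [Lmap_alpha, Lmap_alpha, Finset.sum_mul]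
  exact Finset.sum_congr rfl fun i _ => by rw [mul_assoc, hv i α, ← mul_assoc]

end Lmap

/-! ### The dual of `X_q` and the bilinear maps `B_u` -/

/-- Evaluation of a dual element of `X_q` at `1`. -/
def evalOne (q : ℍ) : ↥(AHDual (XqP q)) →ₗ[ℝ] ℍ where
  toFun β := (β : ℍ →ₗ[ℝ] ℍ) 1
  map_add' a b := rfl
  map_smul' r a := rfl

theorem dual_apply {q : ℍ} (β : ↥(AHDual (XqP q))) (x : ℍ) :
    (β : ℍ →ₗ[ℝ] ℍ) x = x * evalOne q β := by
  have h := β.2.1 x 1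
  rwa [smul_eq_mul, mul_one] at h

theorem idXq_coe {q : ℍ} (hq : q.re = 0) (hq0 : q ≠ 0) :
    ((idXqDual q : ↥(AHDual (XqP q))) : ℍ →ₗ[ℝ] ℍ) = LinearMap.id := by
  rw [idXqDual, dif_pos (⟨hq, hq0⟩ : q.re = 0 ∧ q ≠ 0)]

theorem evalOne_id {q : ℍ} (hq : q.re = 0) (hq0 : q ≠ 0) : evalOne q (idXqDual q) = 1 := by
  show ((idXqDual q : ↥(AHDual (XqP q))) : ℍ →ₗ[ℝ] ℍ) 1 = 1
  rw [idXq_coe hq hq0]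
  rfl

/-- Right multiplication by `q` as a dual element of `X_q`. -/
def rmulQ (q : ℍ) (hq : q.re = 0) (hq0 : q ≠ 0) : ↥(AHDual (XqP q)) :=
  ⟨LinearMap.mulRight ℝ q,
    fun c u => by simp [smul_eq_mul, mul_assoc],
    fun u hu => ((mem_XqP_iff hq hq0).1 hu).2⟩

theorem evalOne_rmulQ {q : ℍ} (hq : q.re = 0) (hq0 : q ≠ 0) :
    evalOne q (rmulQ q hq hq0) = q := by
  show (LinearMap.mulRight ℝ q) 1 = q
  simp

/-- The bilinear form associated to an element `u` of `U`. -/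
def BmapL (U' : Submodule ℝ U) (q : ℍ) :
    U →ₗ[ℝ] (↥(AHDual U') →ₗ[ℝ] ↥(AHDual (XqP q)) →ₗ[ℝ] ℍ) where
  toFun u :=
    { toFun := fun α =>
        { toFun := fun β => (α : U →ₗ[ℝ] ℍ) u * evalOne q β
          map_add' := fun a b => by simp only [map_add, mul_add]
          map_smul' := fun r a => by simp only [map_smul, RingHom.id_apply, mul_smul_comm] }
      map_add' := fun a b => LinearMap.ext fun β => by
        simp only [LinearMap.coe_mk, AddHom.coe_mk, LinearMap.add_apply, Submodule.coe_add,
          add_mul]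
      map_smul' := fun r a => LinearMap.ext fun β => by
        simp only [LinearMap.coe_mk, AddHom.coe_mk, RingHom.id_apply, LinearMap.smul_apply,
          SetLike.val_smul, smul_mul_assoc] }
  map_add' u v := LinearMap.ext fun α => LinearMap.ext fun β => by
    simp only [LinearMap.coe_mk, AddHom.coe_mk, LinearMap.add_apply, map_add, add_mul]
  map_smul' r u := LinearMap.ext fun α => LinearMap.ext fun β => by
    simp only [LinearMap.coe_mk, AddHom.coe_mk, RingHom.id_apply, LinearMap.smul_apply,
      map_smul, smul_mul_assoc]

theorem BmapL_apply {U' : Submodule ℝ U} {q : ℍ} (u : U) (α : ↥(AHDual U'))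
    (β : ↥(AHDual (XqP q))) :
    BmapL U' q u α β = (α : U →ₗ[ℝ] ℍ) u * evalOne q β := rfl

theorem BmapL_mem {q : ℍ} (hq : q.re = 0) (hq0 : q ≠ 0) {U' : Submodule ℝ U} {u w : U}
    (hw : ∀ α : ↥(AHDual U'), (α : U →ₗ[ℝ] ℍ) u * q = (α : U →ₗ[ℝ] ℍ) w) :
    BmapL U' q u ∈ QTP U' (XqP q) := by
  constructor
  · intro β
    obtain ⟨s, t, hst⟩ := dual_char hq hq0 (p := evalOne q β) (fun x hx => by
      rw [← dual_apply]; exact β.2.2 x hx)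
    refine ⟨s • u + t • w, fun α => ?_⟩
    rw [iotaAH_apply, BmapL_apply, hst, mul_add, map_add, map_smul, map_smul,
      Quaternion.mul_coe_eq_smul, mul_smul_comm, hw α]
  · intro α
    refine ⟨(α : U →ₗ[ℝ] ℍ) u, fun β => ?_⟩
    rw [iotaAH_apply, dual_apply]
    rfl

theorem QTP_elim {q : ℍ} (hq : q.re = 0) (hq0 : q ≠ 0) {U' : Submodule ℝ U}
    {B : ↥(AHDual U') →ₗ[ℝ] ↥(AHDual (XqP q)) →ₗ[ℝ] ℍ} (hB : B ∈ QTP U' (XqP q)) :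
    ∃ u w : U, (∀ α : ↥(AHDual U'), (α : U →ₗ[ℝ] ℍ) u * q = (α : U →ₗ[ℝ] ℍ) w) ∧
      B = BmapL U' q u := by
  obtain ⟨u, hu⟩ := hB.1 (idXqDual q)
  obtain ⟨w, hwc⟩ := hB.1 (rmulQ q hq hq0)
  have hBval : ∀ (α : ↥(AHDual U')) (β : ↥(AHDual (XqP q))),
      B α β = (α : U →ₗ[ℝ] ℍ) u * evalOne q β := by
    intro α β
    obtain ⟨v, hv⟩ := hB.2 α
    have h1 := hv (idXqDual q)
    rw [iotaAH_apply, idXq_coe hq hq0, LinearMap.id_apply] at h1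
    have h2 := hu α
    rw [iotaAH_apply] at h2
    have hv' := hv β
    rw [iotaAH_apply, dual_apply] at hv'
    rw [hv', ← h1, h2]
  refine ⟨u, w, fun α => ?_, ?_⟩
  · have h3 := hwc α
    rw [iotaAH_apply] at h3
    have h4 := hBval α (rmulQ q hq hq0)
    rw [evalOne_rmulQ hq hq0] at h4
    rw [← h4, h3]
  · exact LinearMap.ext fun α => LinearMap.ext fun β => hBval α β

theorem hsmul_BmapL {U' : Submodule ℝ U} {q : ℍ} (c : ℍ) (u : U) :
    hsmulBil U' (XqP q) c (BmapL U' q u) = BmapL U' q (c • u) := by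
  refine LinearMap.ext fun α => LinearMap.ext fun β => ?_
  rw [hsmulBil_apply, BmapL_apply, BmapL_apply, alpha_hsmul, mul_assoc]

end QtpXqAux

set_option maxHeartbeats 2000000 in
/-- For a nonzero imaginary quaternion `q` and a finite-dimensional
AH-module `U`, the quaternionic tensor product `U ⊗_ℍ X_q` is AH-isomorphic to a direct
sum of `n` copies of `X_q`, for some `n ≥ 0`. -/
theorem qtp_with_xq_is_multiple_of_xq
    (U' : Submodule ℝ U) [IsScalarTower ℝ ℍ U] [FiniteDimensional ℝ U]
    (hAH : IsAH U') (q : ℍ) (hq : q.re = 0) (hq0 : q ≠ 0) :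
    ∃ n : ℕ, AHIsoNXq U' q n := by
  classical
  obtain ⟨p, hp0, hpq⟩ := QtpXqAux.exists_anticomm (q := q) hq
  have hqp : q * p = -(p * q) := by rw [hpq, neg_neg]
  have hpinv : p⁻¹ * q = -(q * p⁻¹) := by
    calc p⁻¹ * q = p⁻¹ * q * (p * p⁻¹) := by rw [mul_inv_cancel₀ hp0, mul_one]
      _ = p⁻¹ * (q * p) * p⁻¹ := by noncomm_ring
      _ = p⁻¹ * -(p * q) * p⁻¹ := by rw [hqp]
      _ = -(p⁻¹ * p * (q * p⁻¹)) := by noncomm_ring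
      _ = -(q * p⁻¹) := by rw [inv_mul_cancel₀ hp0, one_mul]
  -- the intersection of `M₊` and `M₋` is trivial
  have hinf : QtpXqAux.Mpl U' q ⊓ QtpXqAux.Mmi U' q = ⊥ := by
    rw [eq_bot_iff]
    intro x hx
    obtain ⟨h1, h2⟩ := Submodule.mem_inf.mp hx
    rw [Submodule.mem_bot]
    apply hAH
    intro α hα
    have e1 : α x * q = q * α x := h1 ⟨α, hα⟩
    have e2 : α x * q = -(q * α x) := h2 ⟨α, hα⟩
    have e3 : q * α x = 0 := by
      have h4 : q * α x = -(q * α x) := by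
        conv_lhs => rw [← e1]
        exact e2
      have h5 : (2:ℝ) • (q * α x) = 0 := by
        rw [two_smul]; nth_rewrite 1 [h4]; exact neg_add_cancel _
      exact (smul_eq_zero.mp h5).resolve_left two_ne_zero
    rcases mul_eq_zero.mp e3 with h | h
    · exact absurd h hq0
    · exact h
  -- complex module structure on `M₊`
  have hZcomm : ∀ z : ℂ, QtpXqAux.zeta q hq hq0 z * q = q * QtpXqAux.zeta q hq hq0 z :=
    QtpXqAux.zeta_comm q hq hq0
  letI : SMul ℂ ↥(QtpXqAux.Mpl U' q) :=
    ⟨fun z u => ⟨QtpXqAux.zeta q hq hq0 z • (u : U),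
      QtpXqAux.smul_mem_Mpl_of_comm (hZcomm z) u.2⟩⟩
  have hsd : ∀ (z : ℂ) (u : ↥(QtpXqAux.Mpl U' q)),
      ((z • u : ↥(QtpXqAux.Mpl U' q)) : U) = QtpXqAux.zeta q hq hq0 z • (u : U) :=
    fun _ _ => rfl
  letI : Module ℂ ↥(QtpXqAux.Mpl U' q) :=
    { one_smul := fun u => Subtype.ext (by rw [hsd, map_one, one_smul])
      mul_smul := fun z z' u => Subtype.ext (by rw [hsd, hsd, hsd, map_mul, mul_smul])
      smul_zero := fun z => Subtype.ext (by rw [hsd]; simp)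
      smul_add := fun z u v => Subtype.ext (by
        rw [hsd, Submodule.coe_add, Submodule.coe_add, hsd, hsd, smul_add])
      add_smul := fun z z' u => Subtype.ext (by
        rw [hsd, Submodule.coe_add, hsd, hsd, map_add, add_smul])
      zero_smul := fun u => Subtype.ext (by rw [hsd, map_zero, zero_smul]; rfl) }
  letI : IsScalarTower ℝ ℂ ↥(QtpXqAux.Mpl U' q) := by
    constructor
    intro r z u
    apply Subtype.ext
    rw [hsd]
    have h5 : ((r • z • u : ↥(QtpXqAux.Mpl U' q)) : U)
        = r • (QtpXqAux.zeta q hq hq0 z • (u : U)) := by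
      rw [Submodule.coe_smul, hsd]
    rw [h5, map_smul, smul_assoc]
  haveI : Module.Finite ℂ ↥(QtpXqAux.Mpl U' q) :=
    Module.Finite.of_restrictScalars_finite ℝ ℂ ↥(QtpXqAux.Mpl U' q)
  set n := finrank ℂ ↥(QtpXqAux.Mpl U' q) with hn
  let b : Basis (Fin n) ℂ ↥(QtpXqAux.Mpl U' q) := Module.finBasis ℂ ↥(QtpXqAux.Mpl U' q)
  set v : Fin n → U := fun i => (b i : U) with hvdef
  have hv : ∀ i, v i ∈ QtpXqAux.Mpl U' q := fun i => (b i).2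
  set L : (Fin n → ℍ) →ₗ[ℝ] U := QtpXqAux.Lmap v with hL
  -- `M₊` is contained in the range of `L`
  have hMplle : ∀ x : U, x ∈ QtpXqAux.Mpl U' q → ∃ c, L c = x := by
    intro x hx
    refine ⟨fun i => QtpXqAux.zeta q hq hq0 (b.repr ⟨x, hx⟩ i), ?_⟩
    have hr : ((∑ i, b.repr ⟨x, hx⟩ i • b i : ↥(QtpXqAux.Mpl U' q)) : U) = x := by
      rw [b.sum_repr ⟨x, hx⟩]
    rw [Submodule.coe_sum] at hr
    rw [hL, QtpXqAux.Lmap_apply]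
    have hs : (∑ i, QtpXqAux.zeta q hq hq0 (b.repr ⟨x, hx⟩ i) • v i)
        = ∑ i, ((b.repr ⟨x, hx⟩ i • b i : ↥(QtpXqAux.Mpl U' q)) : U) :=
      Finset.sum_congr rfl fun i _ => rfl
    rw [hs, hr]
  have hMmile : ∀ x : U, x ∈ QtpXqAux.Mmi U' q → ∃ c, L c = x := by
    intro x hx
    obtain ⟨c, hc⟩ := hMplle (p⁻¹ • x) (QtpXqAux.smul_mem_Mpl_of_anti hpinv hx)
    refine ⟨fun i => p * c i, ?_⟩
    rw [hL, QtpXqAux.Lmap_mul, ← hL, hc, smul_smul, mul_inv_cancel₀ hp0, one_smul]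
  -- dimension count : `L` is injective
  have hMplfr : finrank ℝ ↥(QtpXqAux.Mpl U' q) = 2 * n := by
    have h := Module.finrank_mul_finrank ℝ ℂ ↥(QtpXqAux.Mpl U' q)
    rw [Complex.finrank_real_complex] at h
    rw [← h, hn]
  have hMmifr : finrank ℝ ↥(QtpXqAux.Mmi U' q) = 2 * n := by
    rw [← hMplfr]
    refine LinearEquiv.finrank_eq
      { toFun := fun u => ⟨p⁻¹ • (u : U), QtpXqAux.smul_mem_Mpl_of_anti hpinv u.2⟩
        invFun := fun u => ⟨p • (u : U), QtpXqAux.smul_mem_Mmi_of_anti hpq u.2⟩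
        left_inv := fun u => Subtype.ext (by
          simp only [smul_smul, mul_inv_cancel₀ hp0, one_smul])
        right_inv := fun u => Subtype.ext (by
          simp only [smul_smul, inv_mul_cancel₀ hp0, one_smul])
        map_add' := fun u w => Subtype.ext (by simp [smul_add])
        map_smul' := fun r u => Subtype.ext (by
          simp only [Submodule.coe_smul, RingHom.id_apply]
          rw [smul_comm]) }
  have hsup : 4 * n ≤ finrank ℝ ↥(LinearMap.range L) := by
    have hle : QtpXqAux.Mpl U' q ⊔ QtpXqAux.Mmi U' q ≤ LinearMap.range L := by
      refine sup_le ?_ ?_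
      · intro x hx
        obtain ⟨c, hc⟩ := hMplle x hx
        exact ⟨c, hc⟩
      · intro x hx
        obtain ⟨c, hc⟩ := hMmile x hx
        exact ⟨c, hc⟩
    have h := Submodule.finrank_sup_add_finrank_inf_eq (QtpXqAux.Mpl U' q) (QtpXqAux.Mmi U' q)
    rw [hinf, finrank_bot, add_zero, hMplfr, hMmifr] at h
    have h2 := Submodule.finrank_mono hle
    omega
  have h4 : finrank ℝ (Fin n → ℍ) = 4 * n := by
    rw [Module.finrank_pi_fintype ℝ]
    simp [Quaternion.finrank_eq_four, mul_comm]
  have hker : LinearMap.ker L = ⊥ := by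
    have h := LinearMap.finrank_range_add_finrank_ker L
    rw [h4] at h
    have h0 : finrank ℝ ↥(LinearMap.ker L) = 0 := by omega
    exact Submodule.finrank_eq_zero.mp h0
  have hLinj : Function.Injective L := LinearMap.ker_eq_bot.mp hker
  -- the linear map `G : ℍⁿ → U ⊗ X_q`
  let G : (Fin n → ℍ) →ₗ[ℝ] ↥(QTP U' (XqP q)) :=
    { toFun := fun c => ⟨QtpXqAux.BmapL U' q (L c),
        QtpXqAux.BmapL_mem hq hq0 (QtpXqAux.Lmap_witness hv c)⟩
      map_add' := fun c d => Subtype.ext (by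
        show QtpXqAux.BmapL U' q (L (c + d)) = _
        rw [map_add, map_add]
        rfl)
      map_smul' := fun r c => Subtype.ext (by
        show QtpXqAux.BmapL U' q (L (r • c)) = _
        rw [map_smul, map_smul]
        rfl) }
  have hGinj : Function.Injective G := by
    intro c d hcd
    apply hLinj
    have h0 : QtpXqAux.BmapL U' q (L c) = QtpXqAux.BmapL U' q (L d) :=
      congrArg Subtype.val hcd
    have h1 : L c - L d = 0 := by
      apply hAH
      intro α hα
      have h2 := LinearMap.congr_fun (LinearMap.congr_fun h0 ⟨α, hα⟩) (idXqDual q)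
      rw [QtpXqAux.BmapL_apply, QtpXqAux.BmapL_apply, QtpXqAux.evalOne_id hq hq0,
        mul_one, mul_one] at h2
      have h2' : α (L c) = α (L d) := h2
      rw [map_sub, h2', sub_self]
    exact sub_eq_zero.mp h1
  have hGsurj : Function.Surjective G := by
    rintro ⟨B, hB⟩
    obtain ⟨u, w, hw, hBe⟩ := QtpXqAux.QTP_elim hq hq0 hB
    obtain ⟨u₁, u₂, h1, h2, h12⟩ := QtpXqAux.decomp hq hq0 hw
    obtain ⟨c1, hc1⟩ := hMplle u₁ h1
    obtain ⟨c2, hc2⟩ := hMmile u₂ h2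
    refine ⟨c1 + c2, Subtype.ext ?_⟩
    show QtpXqAux.BmapL U' q (L (c1 + c2)) = B
    rw [map_add, hc1, hc2, h12, hBe]
  let E := LinearEquiv.ofBijective G ⟨hGinj, hGsurj⟩
  have hLs : ∀ (cc : ℍ) (f : Fin n → ℍ), L (cc • f) = cc • L f := by
    intro cc f
    rw [show (cc • f) = (fun i => cc * f i) from rfl, hL, QtpXqAux.Lmap_mul]
  refine ⟨n, E.symm, ?_, ?_⟩
  · intro c x
    have h6 : (x : ↥(AHDual U') →ₗ[ℝ] ↥(AHDual (XqP q)) →ₗ[ℝ] ℍ)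
        = QtpXqAux.BmapL U' q (L (E.symm x)) :=
      (congrArg Subtype.val (E.apply_symm_apply x)).symm
    have hx : (⟨hsmulBil U' (XqP q) c ↑x, hsmulBil_mem c x.2⟩ : ↥(QTP U' (XqP q)))
        = G (c • E.symm x) := by
      apply Subtype.ext
      show hsmulBil U' (XqP q) c ↑x = QtpXqAux.BmapL U' q (L (c • E.symm x))
      rw [h6, QtpXqAux.hsmul_BmapL, ← hLs]
    rw [hx, show G (c • E.symm x) = E (c • E.symm x) from rfl, E.symm_apply_apply]
  · ext f
    simp only [Set.mem_image, Set.mem_setOf_eq]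
    constructor
    · rintro ⟨x, hxp, rfl⟩
      have hxG : G (E.symm x) = x := E.apply_symm_apply x
      have hprime : ∀ (α : ↥(AHDual U')) (β : ↥(AHDual (XqP q))),
          ((QtpXqAux.BmapL U' q (L (E.symm x))) α β).re = 0 := by
        intro α β
        have h7 := hxp α β
        rw [← hxG] at h7
        exact h7
      have hLg : L (E.symm x) ∈ QtpXqAux.Mmi U' q := by
        intro α
        have r1 := hprime α (idXqDual q)
        rw [QtpXqAux.BmapL_apply, QtpXqAux.evalOne_id hq hq0, mul_one] at r1
        have r2 := hprime α (QtpXqAux.rmulQ q hq hq0)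
        rw [QtpXqAux.BmapL_apply, QtpXqAux.evalOne_rmulQ hq hq0] at r2
        exact QtpXqAux.anticomm_iff hq r1 r2
      intro i
      set a : Fin n → ℍ := fun j => (2⁻¹:ℝ) • ((E.symm x) j
        - ((Quaternion.normSq q)⁻¹ : ℝ) • (q * (E.symm x) j * q)) with hadef
      have hLa : L a ∈ QtpXqAux.Mpl U' q :=
        QtpXqAux.Lmap_mem_Mpl hv (fun j => QtpXqAux.comm_part hq hq0 ((E.symm x) j))
      have hLd : L (E.symm x - a) ∈ QtpXqAux.Mmi U' q :=
        QtpXqAux.Lmap_mem_Mmi hv (fun j => QtpXqAux.anti_part hq hq0 ((E.symm x) j))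
      have hsum : L a = L (E.symm x) - L (E.symm x - a) := by
        rw [← map_sub, sub_sub_cancel]
      have hLa0 : L a = 0 := by
        have hmem : L a ∈ QtpXqAux.Mpl U' q ⊓ QtpXqAux.Mmi U' q := by
          refine Submodule.mem_inf.mpr ⟨hLa, ?_⟩
          rw [hsum]
          exact Submodule.sub_mem _ hLg hLd
        rw [hinf, Submodule.mem_bot] at hmem
        exact hmem
      have ha0 : a = 0 := hLinj (by rw [hLa0, map_zero])
      have hai : a i = 0 := congrFun ha0 i
      show (E.symm x) i ∈ XqP q
      have h8 := QtpXqAux.anti_part hq hq0 ((E.symm x) i)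
      rw [show (2⁻¹:ℝ) • ((E.symm x) i
        - ((Quaternion.normSq q)⁻¹ : ℝ) • (q * (E.symm x) i * q)) = a i from rfl,
        hai, sub_zero] at h8
      exact h8
    · intro hf
      refine ⟨G f, ?_, ?_⟩
      · intro α β
        show ((QtpXqAux.BmapL U' q (L f)) α β).re = 0
        rw [QtpXqAux.BmapL_apply]
        have hLf : (α : U →ₗ[ℝ] ℍ) (L f) ∈ XqP q := by
          have h9 : L f ∈ QtpXqAux.Mmi U' q := QtpXqAux.Lmap_mem_Mmi hv (fun j => hf j)
          exact h9 α
        obtain ⟨hre1, hre2⟩ := (QtpXqAux.mem_XqP_iff hq hq0).1 hLf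
        obtain ⟨s, t, hst⟩ := QtpXqAux.dual_char hq hq0 (p := QtpXqAux.evalOne q β)
          (fun y hy => by rw [← QtpXqAux.dual_apply]; exact β.2.2 y hy)
        rw [hst, mul_add, Quaternion.mul_coe_eq_smul, mul_smul_comm]
        rw [Quaternion.re_add, Quaternion.re_smul, Quaternion.re_smul, hre1, hre2]
        simp
      · exact E.symm_apply_apply f

end
end

section
/- Suppose 0 → U →^φ V →^ψ W → 0 is an AH-exact sequence of finite-dimensional AH-modules (exact as real vector spaces both on the modules and on the primed subspaces). Then the induced dual sequence 0 → W^† →^{ψ^×} V^† →^{φ^×} U^† → 0 is an exact sequence of real vector spaces. -/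
open Module

local notation "ℍ" => Quaternion ℝ

noncomputable section

variable {U : Type*} [AddCommGroup U] [Module ℝ U] [Module ℍ U]
variable {V : Type*} [AddCommGroup V] [Module ℝ V] [Module ℍ V]
variable {W : Type*} [AddCommGroup W] [Module ℝ W] [Module ℍ W]
variable {X : Type*} [AddCommGroup X] [Module ℝ X] [Module ℍ X]

/-! ### Auxiliary material -/

/-- The quaternion `i`. -/
def qI : ℍ := ⟨0, 1, 0, 0⟩
/-- The quaternion `j`. -/
def qJ : ℍ := ⟨0, 0, 1, 0⟩
/-- The quaternion `k`. -/
def qK : ℍ := ⟨0, 0, 0, 1⟩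

@[simp] theorem qI_re : qI.re = 0 := rfl
@[simp] theorem qI_imI : qI.imI = 1 := rfl
@[simp] theorem qI_imJ : qI.imJ = 0 := rfl
@[simp] theorem qI_imK : qI.imK = 0 := rfl
@[simp] theorem qJ_re : qJ.re = 0 := rfl
@[simp] theorem qJ_imI : qJ.imI = 0 := rfl
@[simp] theorem qJ_imJ : qJ.imJ = 1 := rfl
@[simp] theorem qJ_imK : qJ.imK = 0 := rfl
@[simp] theorem qK_re : qK.re = 0 := rfl
@[simp] theorem qK_imI : qK.imI = 0 := rfl
@[simp] theorem qK_imJ : qK.imJ = 0 := rfl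
@[simp] theorem qK_imK : qK.imK = 1 := rfl
@[simp] theorem qmk_re (a b c d : ℝ) : (⟨a, b, c, d⟩ : ℍ).re = a := rfl
@[simp] theorem qmk_imI (a b c d : ℝ) : (⟨a, b, c, d⟩ : ℍ).imI = b := rfl
@[simp] theorem qmk_imJ (a b c d : ℝ) : (⟨a, b, c, d⟩ : ℍ).imJ = c := rfl
@[simp] theorem qmk_imK (a b c d : ℝ) : (⟨a, b, c, d⟩ : ℍ).imK = d := rfl

theorem qI_mul_qI : qI * qI = (-1 : ℍ) := by
  ext <;> simp [Quaternion.re_mul, Quaternion.re_one, Quaternion.imI_one, Quaternion.imJ_one,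
    Quaternion.imK_one, Quaternion.imI_mul, Quaternion.imJ_mul, Quaternion.imK_mul]
theorem qJ_mul_qI : qJ * qI = -qK := by
  ext <;> simp [Quaternion.re_mul, Quaternion.imI_mul, Quaternion.imJ_mul, Quaternion.imK_mul]
theorem qK_mul_qI : qK * qI = qJ := by
  ext <;> simp [Quaternion.re_mul, Quaternion.imI_mul, Quaternion.imJ_mul, Quaternion.imK_mul]
theorem qI_mul_qJ : qI * qJ = qK := by
  ext <;> simp [Quaternion.re_mul, Quaternion.imI_mul, Quaternion.imJ_mul, Quaternion.imK_mul]
theorem qJ_mul_qJ : qJ * qJ = (-1 : ℍ) := by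
  ext <;> simp [Quaternion.re_mul, Quaternion.re_one, Quaternion.imI_one, Quaternion.imJ_one,
    Quaternion.imK_one, Quaternion.imI_mul, Quaternion.imJ_mul, Quaternion.imK_mul]
theorem qK_mul_qJ : qK * qJ = -qI := by
  ext <;> simp [Quaternion.re_mul, Quaternion.imI_mul, Quaternion.imJ_mul, Quaternion.imK_mul]
theorem qI_mul_qK : qI * qK = -qJ := by
  ext <;> simp [Quaternion.re_mul, Quaternion.imI_mul, Quaternion.imJ_mul, Quaternion.imK_mul]
theorem qJ_mul_qK : qJ * qK = qI := by
  ext <;> simp [Quaternion.re_mul, Quaternion.imI_mul, Quaternion.imJ_mul, Quaternion.imK_mul]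
theorem qK_mul_qK : qK * qK = (-1 : ℍ) := by
  ext <;> simp [Quaternion.re_mul, Quaternion.re_one, Quaternion.imI_one, Quaternion.imJ_one,
    Quaternion.imK_one, Quaternion.imI_mul, Quaternion.imJ_mul, Quaternion.imK_mul]

theorem quat_decomp (c : ℍ) : c = (c.re : ℍ) + c.imI • qI + c.imJ • qJ + c.imK • qK := by
  ext <;> simp

/-- On an AH-module, the `ℍ`-scalar action by a real quaternion agrees with the
real scalar action. -/
theorem isAH_smul_compat {V' : Submodule ℝ V} (hV : IsAH V') (r : ℝ) (v : V) :
    ((r : ℝ) : ℍ) • v = r • v := by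
  have h : ((r : ℝ) : ℍ) • v - r • v = 0 := by
    apply hV
    intro α hα
    have h1 : α (((r : ℝ) : ℍ) • v) = ((r : ℝ) : ℍ) * α v := hα.1 _ v
    rw [map_sub, h1, map_smul, Quaternion.coe_mul_eq_smul, sub_self]
  exact sub_eq_zero.mp h

section Ext

variable (g : V →ₗ[ℝ] ℝ)
variable (compat : ∀ (r : ℝ) (v : V), ((r : ℝ) : ℍ) • v = r • v)

include compat

theorem rsmul_qsmul (r : ℝ) (q : ℍ) (v : V) : (r • q) • v = r • (q • v) := by
  rw [← Quaternion.coe_mul_eq_smul, mul_smul, compat]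

theorem qsmul_rsmul (q : ℍ) (r : ℝ) (v : V) : q • (r • v) = r • (q • v) := by
  rw [← compat, ← mul_smul, ← Quaternion.coe_commutes, mul_smul, compat]

/-- The `ℍ`-linear map `V → ℍ` built from a real functional `g` killing nothing
in particular: `v ↦ g v - g(iv) i - g(jv) j - g(kv) k`. -/
def extLin : V →ₗ[ℝ] ℍ where
  toFun v := ⟨g v, -g (qI • v), -g (qJ • v), -g (qK • v)⟩
  map_add' v w := by
    have h : ∀ q : ℍ, q • (v + w) = q • v + q • w := fun q => smul_add q v w
    ext
    · show g (v + w) = g v + g w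
      simp
    · show -g (qI • (v + w)) = -g (qI • v) + -g (qI • w)
      simp [h]; ring
    · show -g (qJ • (v + w)) = -g (qJ • v) + -g (qJ • w)
      simp [h]; ring
    · show -g (qK • (v + w)) = -g (qK • v) + -g (qK • w)
      simp [h]; ring
  map_smul' r v := by
    have h : ∀ q : ℍ, q • (r • v) = r • (q • v) := fun q => qsmul_rsmul compat q r v
    ext
    · show g (r • v) = r • g v
      simp
    · show -g (qI • (r • v)) = r • -g (qI • v)
      simp [h]
    · show -g (qJ • (r • v)) = r • -g (qJ • v)
      simp [h]
    · show -g (qK • (r • v)) = r • -g (qK • v)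
      simp [h]

@[simp] theorem extLin_apply (v : V) :
    extLin g compat v = ⟨g v, -g (qI • v), -g (qJ • v), -g (qK • v)⟩ := rfl

@[simp] theorem extLin_re (v : V) : (extLin g compat v).re = g v := rfl

theorem extLin_qI (v : V) : extLin g compat (qI • v) = qI * extLin g compat v := by
  have e1 : qI • (qI • v) = -v := by rw [smul_smul, qI_mul_qI, neg_one_smul]
  have e2 : qJ • (qI • v) = -(qK • v) := by rw [smul_smul, qJ_mul_qI, neg_smul]
  have e3 : qK • (qI • v) = qJ • v := by rw [smul_smul, qK_mul_qI]
  ext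
  · rw [Quaternion.re_mul]; simp [e1, e2, e3]
  · rw [Quaternion.imI_mul]; simp [e1, e2, e3]
  · rw [Quaternion.imJ_mul]; simp [e1, e2, e3]
  · rw [Quaternion.imK_mul]; simp [e1, e2, e3]

theorem extLin_qJ (v : V) : extLin g compat (qJ • v) = qJ * extLin g compat v := by
  have e1 : qI • (qJ • v) = qK • v := by rw [smul_smul, qI_mul_qJ]
  have e2 : qJ • (qJ • v) = -v := by rw [smul_smul, qJ_mul_qJ, neg_one_smul]
  have e3 : qK • (qJ • v) = -(qI • v) := by rw [smul_smul, qK_mul_qJ, neg_smul]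
  ext
  · rw [Quaternion.re_mul]; simp [e1, e2, e3]
  · rw [Quaternion.imI_mul]; simp [e1, e2, e3]
  · rw [Quaternion.imJ_mul]; simp [e1, e2, e3]
  · rw [Quaternion.imK_mul]; simp [e1, e2, e3]

theorem extLin_qK (v : V) : extLin g compat (qK • v) = qK * extLin g compat v := by
  have e1 : qI • (qK • v) = -(qJ • v) := by rw [smul_smul, qI_mul_qK, neg_smul]
  have e2 : qJ • (qK • v) = qI • v := by rw [smul_smul, qJ_mul_qK]
  have e3 : qK • (qK • v) = -v := by rw [smul_smul, qK_mul_qK, neg_one_smul]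
  ext
  · rw [Quaternion.re_mul]; simp [e1, e2, e3]
  · rw [Quaternion.imI_mul]; simp [e1, e2, e3]
  · rw [Quaternion.imJ_mul]; simp [e1, e2, e3]
  · rw [Quaternion.imK_mul]; simp [e1, e2, e3]

theorem extLin_equiv (c : ℍ) (v : V) :
    extLin g compat (c • v) = c * extLin g compat v := by
  have hd : c • v = c.re • v + c.imI • (qI • v) + c.imJ • (qJ • v) + c.imK • (qK • v) := by
    conv_lhs => rw [quat_decomp c]
    rw [add_smul, add_smul, add_smul, rsmul_qsmul compat, rsmul_qsmul compat,
      rsmul_qsmul compat, compat]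
  rw [hd]
  simp only [map_add, LinearMap.map_smul]
  rw [extLin_qI g compat, extLin_qJ g compat, extLin_qK g compat]
  conv_rhs => rw [quat_decomp c]
  rw [add_mul, add_mul, add_mul, smul_mul_assoc, smul_mul_assoc, smul_mul_assoc,
    Quaternion.coe_mul_eq_smul]

end Ext

/-- The real part, as a real-linear map `ℍ → ℝ`. -/
def reLin : ℍ →ₗ[ℝ] ℝ where
  toFun x := x.re
  map_add' _ _ := rfl
  map_smul' _ _ := rfl

@[simp] theorem dualPull_coe (U' : Submodule ℝ U) (V' : Submodule ℝ V) (φ : U →ₗ[ℝ] V)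
    (hφH : ∀ (c : ℍ) (u : U), φ (c • u) = c • φ u) (hφ' : ∀ u ∈ U', φ u ∈ V')
    (γ : ↥(AHDual V')) :
    ((dualPull U' V' φ hφH hφ' γ : ↥(AHDual U')) : U →ₗ[ℝ] ℍ)
      = (γ : V →ₗ[ℝ] ℍ).comp φ := rfl

/-- If `0 → U → V → W → 0` is an AH-exact sequence of finite-dimensional
AH-modules, then the dual sequence `0 → W^† → V^† → U^† → 0` is exact. -/
theorem dual_sequence_exact
    (U' : Submodule ℝ U) (V' : Submodule ℝ V) (W' : Submodule ℝ W)
    [FiniteDimensional ℝ U] [FiniteDimensional ℝ V] [FiniteDimensional ℝ W]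
    (hU : IsAH U') (hV : IsAH V') (hW : IsAH W')
    (φ : U →ₗ[ℝ] V) (hφH : ∀ (c : ℍ) (u : U), φ (c • u) = c • φ u)
    (hφ' : ∀ u ∈ U', φ u ∈ V')
    (ψ : V →ₗ[ℝ] W) (hψH : ∀ (c : ℍ) (v : V), ψ (c • v) = c • ψ v)
    (hψ' : ∀ v ∈ V', ψ v ∈ W')
    (hφinj : Function.Injective φ) (hψsurj : Function.Surjective ψ)
    (hexact : LinearMap.range φ = LinearMap.ker ψ)
    (hψ'surj : ∀ w ∈ W', ∃ v ∈ V', ψ v = w)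
    (hexact' : ∀ v ∈ V', ψ v = 0 → ∃ u ∈ U', φ u = v) :
    Function.Injective (dualPull V' W' ψ hψH hψ') ∧
    Function.Surjective (dualPull U' V' φ hφH hφ') ∧
    LinearMap.range (dualPull V' W' ψ hψH hψ')
      = LinearMap.ker (dualPull U' V' φ hφH hφ') := by
  have compat : ∀ (r : ℝ) (v : V), ((r : ℝ) : ℍ) • v = r • v := isAH_smul_compat hV
  refine ⟨?_, ?_, ?_⟩
  · -- injectivity of `ψ^×`
    intro γ₁ γ₂ h
    have h' : (γ₁ : W →ₗ[ℝ] ℍ).comp ψ = (γ₂ : W →ₗ[ℝ] ℍ).comp ψ := by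
      have := Subtype.ext_iff.mp h
      rwa [dualPull_coe, dualPull_coe] at this
    apply Subtype.ext
    apply LinearMap.ext
    intro w
    obtain ⟨v, rfl⟩ := hψsurj w
    exact LinearMap.congr_fun h' v
  · -- surjectivity of `φ^×`
    intro α
    have hf : U' ≤ LinearMap.ker (reLin.comp (α : U →ₗ[ℝ] ℍ)) := fun u hu =>
      LinearMap.mem_ker.mpr (α.2.2 u hu)
    set f : U →ₗ[ℝ] ℝ := reLin.comp (α : U →ₗ[ℝ] ℍ) with hfdef
    set φq : (U ⧸ U') →ₗ[ℝ] (V ⧸ V') := Submodule.mapQ U' V' φ hφ' with hφqdef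
    have hker : LinearMap.ker φq = ⊥ := by
      rw [eq_bot_iff]
      rintro x hx
      obtain ⟨u, rfl⟩ := Submodule.Quotient.mk_surjective U' x
      have hx2 : φq (Submodule.Quotient.mk u) = 0 := hx
      rw [hφqdef, Submodule.mapQ_apply, Submodule.Quotient.mk_eq_zero] at hx2
      have h0 : ψ (φ u) = 0 := by
        have hm : φ u ∈ LinearMap.ker ψ := hexact ▸ LinearMap.mem_range_self φ u
        exact hm
      obtain ⟨u', hu', hu'eq⟩ := hexact' (φ u) hx2 h0
      have huu : u' = u := hφinj hu'eq
      exact (Submodule.mem_bot ℝ).mpr ((Submodule.Quotient.mk_eq_zero U').mpr (huu ▸ hu'))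
    obtain ⟨l, hl⟩ := φq.exists_leftInverse_of_injective hker
    set fq : (U ⧸ U') →ₗ[ℝ] ℝ := U'.liftQ f hf with hfqdef
    set g : V →ₗ[ℝ] ℝ := fq.comp (l.comp V'.mkQ) with hgdef
    have hgφ : ∀ u : U, g (φ u) = f u := by
      intro u
      have h1 : V'.mkQ (φ u) = φq (U'.mkQ u) := by
        rw [hφqdef, Submodule.mkQ_apply, Submodule.mkQ_apply, Submodule.mapQ_apply]
      have h2 : l (φq (U'.mkQ u)) = U'.mkQ u := by
        have h3 := LinearMap.congr_fun hl (U'.mkQ u)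
        simpa using h3
      show fq (l (V'.mkQ (φ u))) = f u
      rw [h1, h2, hfqdef, Submodule.mkQ_apply, Submodule.liftQ_apply]
    have hg' : ∀ v ∈ V', g v = 0 := by
      intro v hv
      show fq (l (V'.mkQ v)) = 0
      have h1 : V'.mkQ v = 0 := by
        rw [Submodule.mkQ_apply, Submodule.Quotient.mk_eq_zero]
        exact hv
      rw [h1, map_zero, map_zero]
    have hβ1 : ∀ (c : ℍ) (v : V), extLin g compat (c • v) = c * extLin g compat v :=
      extLin_equiv g compat
    have hβ2 : ∀ v ∈ V', (extLin g compat v).re = 0 := fun v hv => by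
      rw [extLin_re, hg' v hv]
    refine ⟨⟨extLin g compat, hβ1, hβ2⟩, ?_⟩
    apply Subtype.ext
    apply LinearMap.ext
    intro u
    show extLin g compat (φ u) = (α : U →ₗ[ℝ] ℍ) u
    have hq : ∀ q : ℍ, g (q • φ u) = (q * (α : U →ₗ[ℝ] ℍ) u).re := by
      intro q
      rw [← hφH q u, hgφ (q • u)]
      show ((α : U →ₗ[ℝ] ℍ) (q • u)).re = _
      rw [α.2.1 q u]
    ext
    · show g (φ u) = ((α : U →ₗ[ℝ] ℍ) u).re
      rw [hgφ u]
      rfl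
    · show -g (qI • φ u) = ((α : U →ₗ[ℝ] ℍ) u).imI
      rw [hq qI]
      simp [Quaternion.re_mul]
    · show -g (qJ • φ u) = ((α : U →ₗ[ℝ] ℍ) u).imJ
      rw [hq qJ]
      simp [Quaternion.re_mul]
    · show -g (qK • φ u) = ((α : U →ₗ[ℝ] ℍ) u).imK
      rw [hq qK]
      simp [Quaternion.re_mul]
  · -- exactness at `V^†`
    ext β
    simp only [LinearMap.mem_range, LinearMap.mem_ker]
    constructor
    · rintro ⟨γ, rfl⟩
      apply Subtype.ext
      apply LinearMap.ext
      intro u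
      have h0 : ψ (φ u) = 0 := by
        have hm : φ u ∈ LinearMap.ker ψ := hexact ▸ LinearMap.mem_range_self φ u
        exact hm
      show (γ : W →ₗ[ℝ] ℍ) (ψ (φ u)) = 0
      rw [h0, map_zero]
    · intro hβ0
      have hβφ : ∀ u : U, (β : V →ₗ[ℝ] ℍ) (φ u) = 0 := by
        intro u
        have h1 := Subtype.ext_iff.mp hβ0
        rw [dualPull_coe] at h1
        exact LinearMap.congr_fun h1 u
      obtain ⟨σ, hσ⟩ := ψ.exists_rightInverse_of_surjective (LinearMap.range_eq_top.mpr hψsurj)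
      have hkill : ∀ v : V, ψ v = 0 → (β : V →ₗ[ℝ] ℍ) v = 0 := by
        intro v hv
        have hm : v ∈ LinearMap.range φ := by rw [hexact]; exact hv
        obtain ⟨u, rfl⟩ := hm
        exact hβφ u
      have hσψ : ∀ v : V, (β : V →ₗ[ℝ] ℍ) (σ (ψ v)) = (β : V →ₗ[ℝ] ℍ) v := by
        intro v
        have h0 : (β : V →ₗ[ℝ] ℍ) (σ (ψ v) - v) = 0 := by
          apply hkill
          rw [map_sub]
          have h1 : ψ (σ (ψ v)) = ψ v := LinearMap.congr_fun hσ (ψ v)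
          rw [h1, sub_self]
        rw [map_sub] at h0
        exact sub_eq_zero.mp h0
      have hγH : ∀ (c : ℍ) (w : W),
          ((β : V →ₗ[ℝ] ℍ).comp σ) (c • w) = c * ((β : V →ₗ[ℝ] ℍ).comp σ) w := by
        intro c w
        show (β : V →ₗ[ℝ] ℍ) (σ (c • w)) = c * (β : V →ₗ[ℝ] ℍ) (σ w)
        have h1 : ψ (c • σ w) = c • w := by
          have h2 : ψ (σ w) = w := LinearMap.congr_fun hσ w
          rw [hψH c (σ w), h2]
        calc (β : V →ₗ[ℝ] ℍ) (σ (c • w))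
            = (β : V →ₗ[ℝ] ℍ) (σ (ψ (c • σ w))) := by rw [h1]
          _ = (β : V →ₗ[ℝ] ℍ) (c • σ w) := hσψ _
          _ = c * (β : V →ₗ[ℝ] ℍ) (σ w) := β.2.1 c (σ w)
      have hγ' : ∀ w ∈ W', (((β : V →ₗ[ℝ] ℍ).comp σ) w).re = 0 := by
        intro w hw
        obtain ⟨v, hv, hveq⟩ := hψ'surj w hw
        have h1 : ((β : V →ₗ[ℝ] ℍ).comp σ) w = (β : V →ₗ[ℝ] ℍ) v := by
          show (β : V →ₗ[ℝ] ℍ) (σ w) = (β : V →ₗ[ℝ] ℍ) v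
          rw [← hveq]
          exact hσψ v
        rw [h1]
        exact β.2.2 v hv
      refine ⟨⟨(β : V →ₗ[ℝ] ℍ).comp σ, hγH, hγ'⟩, ?_⟩
      apply Subtype.ext
      apply LinearMap.ext
      intro v
      show (β : V →ₗ[ℝ] ℍ) (σ (ψ v)) = (β : V →ₗ[ℝ] ℍ) v
      exact hσψ v

end
end
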